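/- arXiv:1812.03418 — 3 statements merged into one kernel-verified Lean document; each statement's English description precedes it below -/
import Mathlib

section
/- Let σ be a nonnegative locally finite Borel measure on ℝⁿ, 1 < p < ∞, and 0 < α < n/p. Define the Wolff potential W_{α,p}σ(x) = ∫₀^∞ (σ(B(x,ρ))/ρ^{n-αp})^{1/(p-1)} dρ/ρ. Then for every x ∈ ℝⁿ, W_{α,p}σ(x) ≤ 2^{(n-αp)/(p-1)} · sup{W_{α,p}σ(y) : y ∈ supp(σ)}. -/
open MeasureTheory Metric Set
open scoped ENNReal

private lemma lintegral_Ioi_comp_two_mul (g : ℝ → ℝ≥0∞) (hg : Measurable g) :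
    ∫⁻ ρ in Set.Ioi (0:ℝ), g (2*ρ) = 2⁻¹ * ∫⁻ s in Set.Ioi (0:ℝ), g s := by
  have h2 : (2:ℝ) ≠ 0 := two_ne_zero
  have hpre : (((2:ℝ) * ·) ⁻¹' Ioi 0) = Ioi (0:ℝ) := by
    rw [preimage_const_mul_Ioi₀ _ (by norm_num : (0:ℝ) < 2)]; norm_num
  have hmap : Measure.map ((2:ℝ) * ·) (volume.restrict (Ioi (0:ℝ)))
      = (2:ℝ≥0∞)⁻¹ • (volume.restrict (Ioi (0:ℝ))) := by
    calc Measure.map ((2:ℝ) * ·) (volume.restrict (Ioi (0:ℝ)))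
        = Measure.map ((2:ℝ) * ·) (volume.restrict (((2:ℝ) * ·) ⁻¹' Ioi 0)) := by rw [hpre]
      _ = (Measure.map ((2:ℝ) * ·) volume).restrict (Ioi 0) :=
          (Measure.restrict_map (measurable_const_mul 2) measurableSet_Ioi).symm
      _ = (2:ℝ≥0∞)⁻¹ • (volume.restrict (Ioi (0:ℝ))) := by
          rw [Real.map_volume_mul_left h2, Measure.restrict_smul]
          congr 1
          rw [abs_of_pos (by norm_num : (0:ℝ) < 2⁻¹),
            ENNReal.ofReal_inv_of_pos (by norm_num : (0:ℝ) < 2)]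
          norm_num
  calc ∫⁻ ρ in Set.Ioi (0:ℝ), g (2*ρ)
      = ∫⁻ s, g s ∂(Measure.map ((2:ℝ) * ·) (volume.restrict (Ioi (0:ℝ)))) :=
        (lintegral_map hg (measurable_const_mul 2)).symm
    _ = 2⁻¹ * ∫⁻ s in Set.Ioi (0:ℝ), g s := by rw [hmap]; simp [lintegral_smul_measure]

/-- The Wolff potential `W_{α,p}σ(x) = ∫₀^∞ (σ(B(x,ρ))/ρ^{n-αp})^{1/(p-1)} dρ/ρ`. -/
noncomputable def wolffPotential (n : ℕ) (α p : ℝ)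
    (σ : Measure (EuclideanSpace ℝ (Fin n))) (x : EuclideanSpace ℝ (Fin n)) : ℝ≥0∞ :=
  ∫⁻ ρ in Set.Ioi (0 : ℝ),
    (σ (Metric.ball x ρ) / ENNReal.ofReal (ρ ^ ((n : ℝ) - α * p))) ^ (1 / (p - 1)) *
      ENNReal.ofReal (1 / ρ)

/-- Weak maximum principle for Wolff potentials:
`W_{α,p}σ(x) ≤ 2^{(n-αp)/(p-1)} sup {W_{α,p}σ(y) : y ∈ supp σ}`. -/
theorem wolff_weak_max_principle (n : ℕ) (α p : ℝ) (hp : 1 < p)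
    (hα : 0 < α) (hαn : α < (n : ℝ) / p)
    (σ : Measure (EuclideanSpace ℝ (Fin n))) [IsLocallyFiniteMeasure σ]
    (x : EuclideanSpace ℝ (Fin n)) :
    wolffPotential n α p σ x ≤
      ENNReal.ofReal (2 ^ (((n : ℝ) - α * p) / (p - 1))) *
        ⨆ (y : EuclideanSpace ℝ (Fin n)) (_ : ∀ ε > 0, 0 < σ (Metric.ball y ε)),
          wolffPotential n α p σ y := by
  set t : ℝ := (n : ℝ) - α * p with htdef
  set q : ℝ := 1 / (p - 1) with hqdef
  have hp0 : (0:ℝ) < p := lt_trans one_pos hp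
  have hp1 : (0:ℝ) < p - 1 := by linarith
  have hq : 0 < q := by rw [hqdef]; positivity
  have ht : 0 < t := by
    have : α * p < n := (lt_div_iff₀ hp0).mp hαn
    simp only [htdef]; linarith
  set S : Set (EuclideanSpace ℝ (Fin n)) := {y | ∀ ε > 0, 0 < σ (Metric.ball y ε)} with hSdef
  have hSc : σ Sᶜ = 0 := by
    apply measure_null_of_locally_null
    intro y hy
    simp only [hSdef, mem_compl_iff, mem_setOf_eq] at hy
    push_neg at hy
    obtain ⟨ε, hε, h0⟩ := hy
    exact ⟨Metric.ball y ε, mem_nhdsWithin_of_mem_nhds (ball_mem_nhds y hε),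
      nonpos_iff_eq_zero.mp h0⟩
  by_cases hS : S.Nonempty
  · -- main case
    have hSclosed : IsClosed S := by
      rw [← isOpen_compl_iff, Metric.isOpen_iff]
      intro y hy
      simp only [hSdef, mem_compl_iff, mem_setOf_eq] at hy
      push_neg at hy
      obtain ⟨ε, hε, h0⟩ := hy
      refine ⟨ε/2, by positivity, fun z hz => ?_⟩
      simp only [hSdef, mem_compl_iff, mem_setOf_eq]
      intro h
      have hsub : Metric.ball z (ε/2) ⊆ Metric.ball y ε := by
        apply ball_subset_ball'
        rw [mem_ball] at hz
        linarith
      have := h (ε/2) (by positivity)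
      rw [measure_mono_null hsub (nonpos_iff_eq_zero.mp h0)] at this
      exact lt_irrefl 0 this
    obtain ⟨x₀, hx₀S, hx₀d⟩ := hSclosed.exists_infDist_eq_dist hS x
    have key : ∀ ρ : ℝ, σ (Metric.ball x ρ) ≤ σ (Metric.ball x₀ (2*ρ)) := by
      intro ρ
      have hsub : Metric.ball x ρ ⊆ Metric.ball x₀ (2*ρ) ∪ Sᶜ := by
        intro z hz
        by_cases hzS : z ∈ S
        · left
          have h1 : dist x x₀ ≤ dist x z := hx₀d ▸ infDist_le_dist_of_mem hzS
          have h2 : dist z x < ρ := mem_ball.mp hz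
          have h3 : dist x z = dist z x := dist_comm x z
          have h4 : dist z x₀ ≤ dist z x + dist x x₀ := dist_triangle z x x₀
          rw [mem_ball]
          linarith
        · right; exact hzS
      calc σ (Metric.ball x ρ) ≤ σ (Metric.ball x₀ (2*ρ) ∪ Sᶜ) := measure_mono hsub
        _ ≤ σ (Metric.ball x₀ (2*ρ)) + σ Sᶜ := measure_union_le _ _
        _ = σ (Metric.ball x₀ (2*ρ)) := by rw [hSc, add_zero]
    set g : ℝ → ℝ≥0∞ := fun s =>
      (σ (Metric.ball x₀ s) / ENNReal.ofReal (s ^ t)) ^ q * ENNReal.ofReal (1/s) with hgdef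
    have hmono : Monotone (fun s : ℝ => σ (Metric.ball x₀ s)) :=
      fun a b hab => measure_mono (ball_subset_ball hab)
    have hgmeas : Measurable g := by
      apply Measurable.mul
      · apply (ENNReal.continuous_rpow_const.measurable).comp
        apply Measurable.div hmono.measurable
        exact ENNReal.measurable_ofReal.comp (Real.continuous_rpow_const ht.le).measurable
      · exact ENNReal.measurable_ofReal.comp (measurable_const.div measurable_id)
    have h2t0 : ENNReal.ofReal ((2:ℝ) ^ t) ≠ 0 :=
      (ENNReal.ofReal_pos.mpr (by positivity)).ne'
    have h2ttop : ENNReal.ofReal ((2:ℝ) ^ t) ≠ ⊤ := ENNReal.ofReal_ne_top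
    have hptwise : ∀ ρ ∈ Ioi (0:ℝ),
        (σ (Metric.ball x ρ) / ENNReal.ofReal (ρ ^ t)) ^ q * ENNReal.ofReal (1/ρ)
          ≤ ENNReal.ofReal ((2:ℝ) ^ (t*q)) * (2 * g (2*ρ)) := by
      intro ρ hρ
      rw [mem_Ioi] at hρ
      have step1 : (σ (Metric.ball x ρ) / ENNReal.ofReal (ρ ^ t)) ^ q * ENNReal.ofReal (1/ρ)
          ≤ (σ (Metric.ball x₀ (2*ρ)) / ENNReal.ofReal (ρ ^ t)) ^ q * ENNReal.ofReal (1/ρ) := by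
        exact mul_le_mul_left
          (ENNReal.rpow_le_rpow (ENNReal.div_le_div_right (key ρ) _) hq.le) _
      refine step1.trans (le_of_eq ?_)
      have h2ρt : (2*ρ) ^ t = 2 ^ t * ρ ^ t := Real.mul_rpow (by norm_num) hρ.le
      have e1 : σ (Metric.ball x₀ (2*ρ)) / ENNReal.ofReal (ρ ^ t)
          = ENNReal.ofReal ((2:ℝ)^t) * (σ (Metric.ball x₀ (2*ρ)) / ENNReal.ofReal ((2*ρ) ^ t)) := by
        rw [h2ρt, ENNReal.ofReal_mul (by positivity : (0:ℝ) ≤ 2^t), ← mul_div_assoc,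
          ENNReal.mul_div_mul_left _ _ h2t0 h2ttop]
      rw [e1, ENNReal.mul_rpow_of_nonneg _ _ hq.le,
        ENNReal.ofReal_rpow_of_pos (by positivity : (0:ℝ) < 2^t),
        ← Real.rpow_mul (by norm_num : (0:ℝ) ≤ 2)]
      have e2 : ENNReal.ofReal (1/ρ) = 2 * ENNReal.ofReal (1/(2*ρ)) := by
        rw [show (1:ℝ)/ρ = 2 * (1/(2*ρ)) by field_simp, ENNReal.ofReal_mul (by norm_num)]
        norm_num
      rw [e2, hgdef]
      ring
    have hconstmeas : Measurable fun ρ =>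
        ENNReal.ofReal ((2:ℝ) ^ (t*q)) * (2 * g (2*ρ)) :=
      (measurable_const.mul ((hgmeas.comp (measurable_const_mul 2)).const_mul 2))
    have hW : wolffPotential n α p σ x ≤ ENNReal.ofReal ((2:ℝ) ^ (t*q)) * wolffPotential n α p σ x₀ := by
      rw [wolffPotential, wolffPotential]
      calc ∫⁻ ρ in Ioi (0:ℝ),
            (σ (Metric.ball x ρ) / ENNReal.ofReal (ρ ^ t)) ^ q * ENNReal.ofReal (1/ρ)
          ≤ ∫⁻ ρ in Ioi (0:ℝ), ENNReal.ofReal ((2:ℝ) ^ (t*q)) * (2 * g (2*ρ)) :=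
            setLIntegral_mono hconstmeas hptwise
        _ = ENNReal.ofReal ((2:ℝ) ^ (t*q)) * (2 * ∫⁻ ρ in Ioi (0:ℝ), g (2*ρ)) := by
            rw [lintegral_const_mul' _ _ ENNReal.ofReal_ne_top,
              lintegral_const_mul' _ _ (by norm_num : (2:ℝ≥0∞) ≠ ⊤)]
        _ = ENNReal.ofReal ((2:ℝ) ^ (t*q)) * (2 * (2⁻¹ * ∫⁻ s in Ioi (0:ℝ), g s)) := by
            rw [lintegral_Ioi_comp_two_mul g hgmeas]
        _ = ENNReal.ofReal ((2:ℝ) ^ (t*q)) * ∫⁻ s in Ioi (0:ℝ), g s := by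
            rw [← mul_assoc (2:ℝ≥0∞), ENNReal.mul_inv_cancel (by norm_num) (by norm_num), one_mul]
    have hsup : wolffPotential n α p σ x₀ ≤
        ⨆ (y : EuclideanSpace ℝ (Fin n)) (_ : ∀ ε > 0, 0 < σ (Metric.ball y ε)),
          wolffPotential n α p σ y :=
      le_iSup₂ (f := fun y (_ : ∀ ε > 0, 0 < σ (Metric.ball y ε)) => wolffPotential n α p σ y)
        x₀ hx₀S
    have htq : t * q = t / (p - 1) := by rw [hqdef, mul_one_div]
    calc wolffPotential n α p σ x
        ≤ ENNReal.ofReal ((2:ℝ) ^ (t*q)) * wolffPotential n α p σ x₀ := hW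
      _ ≤ ENNReal.ofReal ((2:ℝ) ^ (t*q)) *
          ⨆ (y : EuclideanSpace ℝ (Fin n)) (_ : ∀ ε > 0, 0 < σ (Metric.ball y ε)),
            wolffPotential n α p σ y := mul_le_mul_right hsup _
      _ = _ := by rw [htq]
  · -- support empty: σ = 0
    have huniv : σ univ = 0 := by
      have hSe : S = ∅ := not_nonempty_iff_eq_empty.mp hS
      have : Sᶜ = univ := by rw [hSe, compl_empty]
      rw [← this]; exact hSc
    have hz : ∀ ρ : ℝ,
        (σ (Metric.ball x ρ) / ENNReal.ofReal (ρ ^ t)) ^ q * ENNReal.ofReal (1/ρ) = 0 := by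
      intro ρ
      rw [measure_mono_null (subset_univ _) huniv, ENNReal.zero_div,
        ENNReal.zero_rpow_of_pos hq, zero_mul]
    have : wolffPotential n α p σ x = 0 := by
      rw [wolffPotential]
      calc ∫⁻ ρ in Ioi (0:ℝ),
            (σ (Metric.ball x ρ) / ENNReal.ofReal (ρ ^ t)) ^ q * ENNReal.ofReal (1/ρ)
          = ∫⁻ _ in Ioi (0:ℝ), (0:ℝ≥0∞) := lintegral_congr fun ρ => hz ρ
        _ = 0 := lintegral_zero
    rw [this]
    exact zero_le'
end

section
/- Let σ be a locally finite Borel measure on ℝⁿ, let D be the set of dyadic cubes Q with σ(Q) > 0, let 0 < q < r, with r ≥ 1, let (λ_Q)_{Q∈D} be a finitely supported family of nonnegative reals. Then Σ_{R∈D} λ_R σ(R) ( (1/σ(R)) ∫_R (Σ_{Q⊆R} λ_Q χ_Q)^q dσ )^{(r-1)/q} ≤ C(r,q) ∫_{ℝⁿ} (Σ_{Q∈D} λ_Q χ_Q)^r dσ, where C(r,q) depends only on r and q. -/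
open MeasureTheory Set
open scoped ENNReal

/-- A dyadic cube in `ℝⁿ`, given by a generation `k : ℤ` and a corner index `m : Fin n → ℤ`. -/
structure DyadicCube (n : ℕ) where
  k : ℤ
  m : Fin n → ℤ

/-- The set of points of a dyadic cube: `∏ᵢ [mᵢ 2^{-k}, (mᵢ+1) 2^{-k})`. -/
def DyadicCube.toSet {n : ℕ} (Q : DyadicCube n) : Set (Fin n → ℝ) :=
  {x | ∀ i, (Q.m i : ℝ) * (2 : ℝ) ^ (-Q.k) ≤ x i ∧ x i < ((Q.m i : ℝ) + 1) * (2 : ℝ) ^ (-Q.k)}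

/-- `Σ_{Q} λ_Q χ_Q(x)`. -/
noncomputable def dSum {n : ℕ} (lam : DyadicCube n → ℝ≥0∞) (x : Fin n → ℝ) : ℝ≥0∞ :=
  ∑' Q : DyadicCube n, Set.indicator Q.toSet (fun _ => lam Q) x

/-- `Σ_{Q ⊆ R} λ_Q χ_Q(x)`. -/
noncomputable def dSumIn {n : ℕ} (lam : DyadicCube n → ℝ≥0∞) (R : DyadicCube n)
    (x : Fin n → ℝ) : ℝ≥0∞ :=
  ∑' Q : {Q : DyadicCube n // Q.toSet ⊆ R.toSet}, Set.indicator Q.1.toSet (fun _ => lam Q.1) x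

set_option linter.unusedSectionVars false

namespace DyadicCube

lemma mem_toSet_iff {n : ℕ} (Q : DyadicCube n) (x : Fin n → ℝ) :
    x ∈ Q.toSet ↔ ∀ i, (Q.m i : ℝ) ≤ x i * 2 ^ Q.k ∧ x i * 2 ^ Q.k < Q.m i + 1 := by
  have h2 : (0:ℝ) < (2:ℝ) ^ Q.k := zpow_pos (by norm_num) _
  unfold toSet
  simp only [Set.mem_setOf_eq, zpow_neg]
  refine forall_congr' fun i => ?_
  rw [mul_inv_le_iff₀ h2, ← div_eq_mul_inv, lt_div_iff₀ h2]

lemma coord_subset {k k' : ℤ} (hkk : k' ≤ k) {m m' : ℤ} {y : ℝ}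
    (h1 : (m:ℝ) ≤ y * 2 ^ k ∧ y * 2 ^ k < m + 1)
    (h2 : (m':ℝ) ≤ y * 2 ^ k' ∧ y * 2 ^ k' < m' + 1)
    (x : ℝ) (hx : (m:ℝ) ≤ x * 2 ^ k ∧ x * 2 ^ k < m + 1) :
    (m':ℝ) ≤ x * 2 ^ k' ∧ x * 2 ^ k' < m' + 1 := by
  set d : ℤ := 2 ^ (k - k').toNat with hd_def
  have hdR : ((d:ℤ):ℝ) = (2:ℝ) ^ (k - k') := by
    rw [hd_def]
    push_cast
    rw [← zpow_natCast, Int.toNat_of_nonneg (by omega)]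
  have hdpos : (0:ℝ) < (d:ℤ) := by
    rw [hdR]; exact zpow_pos (by norm_num) _
  have hsplit : ∀ z : ℝ, z * 2 ^ k' = z * 2 ^ k / (d:ℝ) := by
    intro z
    rw [hdR, div_eq_mul_inv, ← zpow_neg, mul_assoc, ← zpow_add₀ (two_ne_zero)]
    ring_nf
  have hy1 : (m':ℝ) * d ≤ y * 2 ^ k := by
    have := h2.1
    rw [hsplit, le_div_iff₀ hdpos] at this
    exact this
  have hy2 : y * 2 ^ k < ((m':ℝ) + 1) * d := by
    have := h2.2
    rw [hsplit, div_lt_iff₀ hdpos] at this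
    exact this
  have hint1 : m' * d ≤ m := by
    have : (↑(m' * d) : ℝ) < ↑m + 1 := by push_cast; nlinarith [h1.2]
    have := (by exact_mod_cast this : m' * d < m + 1)
    omega
  have hint2 : m + 1 ≤ (m' + 1) * d := by
    have : (↑m : ℝ) < ↑((m' + 1) * d) := by push_cast; nlinarith [h1.1]
    have := (by exact_mod_cast this : m < (m' + 1) * d)
    omega
  constructor
  · rw [hsplit, le_div_iff₀ hdpos]
    have : ((m' * d : ℤ) : ℝ) ≤ (m:ℝ) := by exact_mod_cast hint1
    push_cast at this ⊢
    linarith [hx.1]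
  · rw [hsplit, div_lt_iff₀ hdpos]
    have : ((m:ℝ) + 1) ≤ (((m' + 1) * d : ℤ) : ℝ) := by exact_mod_cast hint2
    push_cast at this ⊢
    linarith [hx.2]

lemma subset_or_subset {n : ℕ} {Q R : DyadicCube n}
    (hne : (Q.toSet ∩ R.toSet).Nonempty) : Q.toSet ⊆ R.toSet ∨ R.toSet ⊆ Q.toSet := by
  obtain ⟨y, hyQ, hyR⟩ := hne
  rw [mem_toSet_iff] at hyQ hyR
  rcases le_total R.k Q.k with h | h
  · left
    intro x hx
    rw [mem_toSet_iff] at hx ⊢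
    exact fun i => coord_subset h (hyQ i) (hyR i) (x i) (hx i)
  · right
    intro x hx
    rw [mem_toSet_iff] at hx ⊢
    exact fun i => coord_subset h (hyR i) (hyQ i) (x i) (hx i)

lemma measurableSet_toSet {n : ℕ} (Q : DyadicCube n) : MeasurableSet Q.toSet := by
  have h : Q.toSet = ⋂ i, (fun x : Fin n → ℝ => x i) ⁻¹'
      (Set.Ico ((Q.m i : ℝ) * 2 ^ (-Q.k)) (((Q.m i : ℝ) + 1) * 2 ^ (-Q.k))) := by
    ext x
    simp [DyadicCube.toSet, Set.mem_Ico]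
  rw [h]
  exact MeasurableSet.iInter fun i => (measurable_pi_apply i) measurableSet_Ico

lemma measure_lt_top {n : ℕ} (Q : DyadicCube n) (σ : Measure (Fin n → ℝ))
    [IsLocallyFiniteMeasure σ] : σ Q.toSet < ⊤ := by
  have hsub : Q.toSet ⊆ Set.Icc (fun i => (Q.m i : ℝ) * 2 ^ (-Q.k))
      (fun i => ((Q.m i : ℝ) + 1) * 2 ^ (-Q.k)) := by
    intro x hx
    constructor <;> intro i
    · exact (hx i).1
    · exact le_of_lt (hx i).2
  exact lt_of_le_of_lt (measure_mono hsub) (isCompact_Icc.measure_lt_top)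

end DyadicCube

lemma exists_maximal_above {α : Type*} [PartialOrder α] (s : Finset α) {a : α} (ha : a ∈ s) :
    ∃ b ∈ s, a ≤ b ∧ ∀ c ∈ s, b ≤ c → b = c := by
  classical
  obtain ⟨b, hb, hmax⟩ := Finset.exists_maximal (s := s.filter (a ≤ ·))
    ⟨a, by simp [ha]⟩
  simp only [Finset.mem_filter] at hb
  refine ⟨b, hb.1, hb.2, fun c hc hbc => ?_⟩
  by_contra hne
  exact hne (le_antisymm hbc (hmax (by simp [hc, le_trans hb.2 hbc]) hbc))

section Maximal

variable {α : Type*} [MeasurableSpace α] (σ : Measure α) (φ : α → ℝ≥0∞)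

/-- Average of `φ` over a set. -/
noncomputable def avgOn (S : Set α) : ℝ≥0∞ := (σ S)⁻¹ * ∫⁻ x in S, φ x ∂σ

/-- Maximal function over a finite family of sets. -/
noncomputable def maxFn (T : Finset (Set α)) (x : α) : ℝ≥0∞ :=
  T.sup fun S => S.indicator (fun _ => avgOn σ φ S) x

variable {T : Finset (Set α)}

lemma measurable_maxFn (hTm : ∀ S ∈ T, MeasurableSet S) : Measurable (maxFn σ φ T) := by
  classical
  induction T using Finset.induction_on with
  | empty =>
      have h : maxFn σ φ (∅ : Finset (Set α)) = fun _ => 0 := by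
        funext x; simp [maxFn]
      rw [h]; exact measurable_const
  | @insert S T' hST ih =>
      have h1 : Measurable (S.indicator (fun _ => avgOn σ φ S)) :=
        Measurable.indicator measurable_const (hTm S (Finset.mem_insert_self _ _))
      have h2 := ih (fun S' hS' => hTm S' (Finset.mem_insert_of_mem hS'))
      have : maxFn σ φ (insert S T') =
          fun x => max (S.indicator (fun _ => avgOn σ φ S) x) (maxFn σ φ T' x) := by
        funext x; simp [maxFn, Finset.sup_insert, max_def]
      rw [this]
      exact h1.max h2

lemma avgOn_le_maxFn {S : Set α} (hS : S ∈ T) {x : α} (hx : x ∈ S) :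
    avgOn σ φ S ≤ maxFn σ φ T x := by
  have := Finset.le_sup (f := fun S => S.indicator (fun _ => avgOn σ φ S) x) hS
  simp only [Set.indicator_of_mem hx] at this; exact this

lemma maxFn_eq_zero_of_forall_not_mem {x : α} (hx : ∀ S ∈ T, x ∉ S) : maxFn σ φ T x = 0 := by
  refine le_antisymm (Finset.sup_le fun S hS => ?_) (zero_le)
  rw [Set.indicator_of_notMem (hx S hS)]

lemma setOf_le_maxFn_eq (v : ℝ≥0∞) (hv : v ≠ 0) :
    {x | v ≤ maxFn σ φ T x} = ⋃ S ∈ T.filter (fun S => v ≤ avgOn σ φ S), S := by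
  classical
  ext x
  simp only [Set.mem_setOf_eq, Set.mem_iUnion, Finset.mem_filter, exists_prop]
  constructor
  · intro hle
    have hne : T.Nonempty := by
      rcases Finset.eq_empty_or_nonempty T with h | h
      · exfalso
        apply hv
        subst h
        have h0 : maxFn σ φ (∅ : Finset (Set α)) x = 0 := by simp [maxFn]
        rw [h0] at hle
        exact le_antisymm hle (zero_le)
      · exact h
    obtain ⟨S, hS, hEq⟩ := Finset.exists_mem_eq_sup T hne
      (fun S => S.indicator (fun _ => avgOn σ φ S) x)
    have hval : v ≤ S.indicator (fun _ => avgOn σ φ S) x := by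
      rw [maxFn] at hle; rw [← hEq]; exact hle
    have hxS : x ∈ S := by
      by_contra hxS
      rw [Set.indicator_of_notMem hxS] at hval
      exact hv (le_antisymm hval (zero_le))
    rw [Set.indicator_of_mem hxS] at hval
    exact ⟨S, ⟨hS, hval⟩, hxS⟩
  · rintro ⟨S, ⟨hS, havg⟩, hxS⟩
    exact le_trans havg (avgOn_le_maxFn σ φ hS hxS)

lemma meas_le_inv_mul_setLIntegral {S : Set α} {v : ℝ≥0∞} (hv0 : v ≠ 0) (hvt : v ≠ ⊤)
    (hav : v ≤ avgOn σ φ S) : σ S ≤ v⁻¹ * ∫⁻ x in S, φ x ∂σ := by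
  rcases eq_or_ne (σ S) 0 with h0 | h0
  · simp [h0]
  have hst : σ S ≠ ⊤ := by
    intro ht
    rw [avgOn, ht] at hav
    simp only [ENNReal.inv_top, zero_mul, le_zero_iff] at hav
    exact hv0 hav
  have hmul : v * σ S ≤ ∫⁻ x in S, φ x ∂σ := by
    have := mul_le_mul_left hav (σ S)
    rw [avgOn, mul_comm ((σ S)⁻¹) _, mul_assoc, ENNReal.inv_mul_cancel h0 hst, mul_one] at this
    exact this
  calc σ S = v⁻¹ * (v * σ S) := by
        rw [← mul_assoc, ENNReal.inv_mul_cancel hv0 hvt, one_mul]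
    _ ≤ v⁻¹ * ∫⁻ x in S, φ x ∂σ := mul_le_mul_right hmul _

lemma maxFn_weak_type (hTm : ∀ S ∈ T, MeasurableSet S)
    (hcomp : ∀ S ∈ T, ∀ S' ∈ T, (S ∩ S').Nonempty → S ⊆ S' ∨ S' ⊆ S)
    {v : ℝ≥0∞} (hv0 : v ≠ 0) (hvt : v ≠ ⊤) :
    σ {x | v ≤ maxFn σ φ T x} ≤ v⁻¹ * ∫⁻ x in {x | v ≤ maxFn σ φ T x}, φ x ∂σ := by
  classical
  set G : Finset (Set α) := T.filter (fun S => v ≤ avgOn σ φ S) with hG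
  set M : Finset (Set α) := G.filter (fun S => ∀ S' ∈ G, S ⊆ S' → S = S') with hM
  have hMsub : ∀ S ∈ M, S ∈ T := fun S hS =>
    Finset.mem_of_mem_filter _ (Finset.mem_of_mem_filter _ hS)
  have hunion : ⋃ S ∈ G, S = ⋃ S ∈ M, S := by
    apply Set.Subset.antisymm
    · intro x hx
      simp only [Set.mem_iUnion, exists_prop] at hx ⊢
      obtain ⟨S, hSG, hxS⟩ := hx
      obtain ⟨B, hBG, hSB, hBmax⟩ := exists_maximal_above G hSG
      exact ⟨B, Finset.mem_filter.2 ⟨hBG, hBmax⟩, hSB hxS⟩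
    · refine Set.iUnion₂_mono' fun S hS => ⟨S, Finset.mem_of_mem_filter _ hS, le_rfl⟩
  have hdisj : (↑M : Set (Set α)).PairwiseDisjoint id := by
    intro S hS S' hS' hne
    rw [Function.onFun, Set.disjoint_iff_inter_eq_empty]
    by_contra hint
    have hnonempty : (S ∩ S').Nonempty := Set.nonempty_iff_ne_empty.2 hint
    simp only [hM, Finset.mem_coe, Finset.mem_filter] at hS hS'
    rcases hcomp S (Finset.mem_of_mem_filter _ (Finset.mem_coe.1 (by exact_mod_cast hS.1)))
      S' (Finset.mem_of_mem_filter _ hS'.1) hnonempty with h | h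
    · exact hne (hS.2 S' hS'.1 h)
    · exact hne ((hS'.2 S hS.1 h).symm)
  have hset := setOf_le_maxFn_eq σ φ (T := T) v hv0
  rw [hset, hunion]
  calc σ (⋃ S ∈ M, S) ≤ ∑ S ∈ M, σ S := measure_biUnion_finset_le M _
    _ ≤ ∑ S ∈ M, v⁻¹ * ∫⁻ x in S, φ x ∂σ := by
        refine Finset.sum_le_sum fun S hS => ?_
        have hSG : S ∈ G := Finset.mem_of_mem_filter _ hS
        rw [hG, Finset.mem_filter] at hSG
        exact meas_le_inv_mul_setLIntegral σ φ hv0 hvt hSG.2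
    _ = v⁻¹ * ∑ S ∈ M, ∫⁻ x in S, φ x ∂σ := by rw [Finset.mul_sum]
    _ = v⁻¹ * ∫⁻ x in ⋃ S ∈ M, S, φ x ∂σ := by
        congr 1
        exact (lintegral_biUnion_finset (t := fun S => S) (by exact hdisj)
          (fun S hS => hTm S (hMsub S hS)) φ).symm

end Maximal

section FiniteRange

variable {α : Type*} [MeasurableSpace α] (σ : Measure α)

lemma lintegral_mul_comp_finite_range (f ψ : α → ℝ≥0∞) (hf : Measurable f)
    (hψ : Measurable ψ) (V : Finset ℝ≥0∞) (hV : ∀ x, f x ∈ V) (g : ℝ≥0∞ → ℝ≥0∞) :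
    ∫⁻ x, ψ x * g (f x) ∂σ = ∑ v ∈ V, g v * ∫⁻ x in f ⁻¹' {v}, ψ x ∂σ := by
  classical
  have hpt : ∀ x, ψ x * g (f x) =
      ∑ v ∈ V, (f ⁻¹' {v}).indicator (fun y => g v * ψ y) x := by
    intro x
    rw [Finset.sum_eq_single (f x)]
    · rw [Set.indicator_of_mem (by simp : x ∈ f ⁻¹' {f x})]
      ring
    · intro v _ hv
      rw [Set.indicator_of_notMem]
      simp [Set.mem_preimage]
      exact fun h => hv h.symm
    · intro h; exact absurd (hV x) h
  calc ∫⁻ x, ψ x * g (f x) ∂σ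
      = ∫⁻ x, ∑ v ∈ V, (f ⁻¹' {v}).indicator (fun y => g v * ψ y) x ∂σ := by
        congr 1; funext x; exact hpt x
    _ = ∑ v ∈ V, ∫⁻ x, (f ⁻¹' {v}).indicator (fun y => g v * ψ y) x ∂σ := by
        refine lintegral_finset_sum _ fun v _ => ?_
        exact (Measurable.indicator (measurable_const.mul hψ) (hf (measurableSet_singleton v)))
    _ = ∑ v ∈ V, g v * ∫⁻ x in f ⁻¹' {v}, ψ x ∂σ := by
        refine Finset.sum_congr rfl fun v _ => ?_
        rw [lintegral_indicator (hf (measurableSet_singleton v))]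
        exact lintegral_const_mul (g v) hψ

lemma lintegral_comp_finite_range (f : α → ℝ≥0∞) (hf : Measurable f)
    (V : Finset ℝ≥0∞) (hV : ∀ x, f x ∈ V) (g : ℝ≥0∞ → ℝ≥0∞) :
    ∫⁻ x, g (f x) ∂σ = ∑ v ∈ V, g v * σ (f ⁻¹' {v}) := by
  have := lintegral_mul_comp_finite_range σ f (fun _ => 1) hf measurable_const V hV g
  simpa [setLIntegral_one] using this

lemma levelset_eq_biUnion (f : α → ℝ≥0∞) (V : Finset ℝ≥0∞) (hV : ∀ x, f x ∈ V)
    (v : ℝ≥0∞) [DecidablePred fun w => v ≤ w] :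
    {x | v ≤ f x} = ⋃ w ∈ V.filter (fun w => v ≤ w), f ⁻¹' {w} := by
  ext x
  simp only [Set.mem_setOf_eq, Set.mem_iUnion, Finset.mem_filter, exists_prop,
    Set.mem_preimage, Set.mem_singleton_iff]
  constructor
  · intro h; exact ⟨f x, ⟨hV x, h⟩, rfl⟩
  · rintro ⟨w, ⟨_, hw⟩, rfl⟩; exact hw

lemma pairwiseDisjoint_preimage (f : α → ℝ≥0∞) (V : Finset ℝ≥0∞) :
    (↑V : Set ℝ≥0∞).PairwiseDisjoint (fun v => f ⁻¹' {v}) := by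
  intro v _ w _ hvw
  rw [Function.onFun, Set.disjoint_left]
  rintro x hx hx'
  exact hvw (hx.symm.trans hx')

end FiniteRange

section RealDiscrete

/-- Key pointwise inequality: `a^p - b^p ≤ p/(p-1) * ((a^{p-1} - b^{p-1}) * a)`. -/
lemma key_pow_ineq {p a b : ℝ} (hp : 1 < p) (hb : 0 ≤ b) (hba : b ≤ a) :
    a ^ p - b ^ p ≤ p / (p - 1) * ((a ^ (p - 1) - b ^ (p - 1)) * a) := by
  have ha : 0 ≤ a := le_trans hb hba
  rcases eq_or_lt_of_le ha with h0 | h0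
  · have hb0 : b = 0 := le_antisymm (h0 ▸ hba) hb
    rw [← h0, ← hb0]
    simp [Real.zero_rpow (by positivity : p ≠ 0),
      Real.zero_rpow (by intro h; nlinarith : p - 1 ≠ 0)]
  set s : ℝ := p - 1 with hs_def
  have hs : 0 < s := by simp [hs_def]; linarith
  -- AM-GM : (s+1) * (a * b^s) ≤ a^(s+1) + s * b^(s+1)
  have hsp1 : (0:ℝ) < s + 1 := by linarith
  have hamgm : (s + 1) * (a * b ^ s) ≤ a ^ (s + 1) + s * b ^ (s + 1) := by
    have h := Real.geom_mean_le_arith_mean2_weighted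
      (w₁ := 1 / (s + 1)) (w₂ := s / (s + 1))
      (p₁ := a ^ (s + 1)) (p₂ := b ^ (s + 1))
      (by positivity) (by positivity)
      (by positivity) (by positivity)
      (by field_simp; ring)
    have e1 : (a ^ (s + 1)) ^ ((1:ℝ) / (s + 1)) = a := by
      rw [← Real.rpow_mul ha, mul_one_div, div_self (ne_of_gt hsp1), Real.rpow_one]
    have e2 : (b ^ (s + 1)) ^ (s / (s + 1)) = b ^ s := by
      rw [← Real.rpow_mul hb]
      congr 1
      first
      | (field_simp; ring)
      | field_simp
    rw [e1, e2] at h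
    have h2 := mul_le_mul_of_nonneg_left h (le_of_lt hsp1)
    have e3 : (s + 1) * (1 / (s + 1) * a ^ (s + 1) + s / (s + 1) * b ^ (s + 1))
        = a ^ (s + 1) + s * b ^ (s + 1) := by
      first
      | (field_simp; ring)
      | field_simp
    rw [e3] at h2
    linarith
  have hp_eq : p = s + 1 := by simp [hs_def]
  rw [hp_eq]
  have haa : a ^ (s + 1) = a ^ s * a := Real.rpow_add_one (ne_of_gt h0) s
  rw [div_mul_eq_mul_div, le_div_iff₀ hs]
  nlinarith [hamgm]

end RealDiscrete

lemma sum_swap_tri (N : ℕ) (h : ℕ → ℕ → ℝ) :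
    ∑ i ∈ Finset.Icc 1 N, ∑ k ∈ Finset.range i, h i k
      = ∑ k ∈ Finset.range N, ∑ i ∈ Finset.Icc (k + 1) N, h i k := by
  classical
  have step1 : ∀ i ∈ Finset.Icc 1 N, ∑ k ∈ Finset.range i, h i k
      = ∑ k ∈ Finset.range N, if k < i then h i k else 0 := by
    intro i hi
    rw [Finset.mem_Icc] at hi
    rw [← Finset.sum_filter]
    congr 1
    ext k
    simp only [Finset.mem_filter, Finset.mem_range]
    omega
  have step2 : ∀ k ∈ Finset.range N, (∑ i ∈ Finset.Icc 1 N, if k < i then h i k else 0)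
      = ∑ i ∈ Finset.Icc (k + 1) N, h i k := by
    intro k hk
    rw [Finset.mem_range] at hk
    rw [← Finset.sum_filter]
    congr 1
    ext i
    simp only [Finset.mem_filter, Finset.mem_Icc]
    omega
  rw [Finset.sum_congr rfl step1, Finset.sum_comm, Finset.sum_congr rfl step2]

open Finset in
lemma abstract_layercake (p : ℝ) (hp : 1 < p) (N : ℕ) (w μ I : ℕ → ℝ)
    (hw0 : w 0 = 0) (hwpos : ∀ i, 1 ≤ i → i ≤ N → 0 < w i)
    (hwmono : ∀ i j, i ≤ j → j ≤ N → w i ≤ w j)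
    (hμ : ∀ i, 0 ≤ μ i) (hI : ∀ i, 0 ≤ I i)
    (hweak : ∀ i, 1 ≤ i → i ≤ N → w i * (∑ j ∈ Icc i N, μ j) ≤ ∑ j ∈ Icc i N, I j) :
    ∑ i ∈ Icc 1 N, w i ^ p * μ i ≤ p / (p - 1) * ∑ i ∈ Icc 1 N, w i ^ (p - 1) * I i := by
  have hp0 : (0:ℝ) < p := by linarith
  have hpm : (0:ℝ) < p - 1 := by linarith
  have hp' : (0:ℝ) ≤ p / (p - 1) := by positivity
  have hwnn : ∀ i, i ≤ N → 0 ≤ w i := by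
    intro i hi
    rcases Nat.eq_zero_or_pos i with h | h
    · rw [h, hw0]
    · exact (hwpos i h hi).le
  have htel : ∀ i, 1 ≤ i → i ≤ N → w i ^ p
      = ∑ k ∈ range i, (w (k + 1) ^ p - w k ^ p) := by
    intro i _ _
    rw [Finset.sum_range_sub (fun k => w k ^ p) i, hw0,
      Real.zero_rpow (ne_of_gt hp0), sub_zero]
  have htel' : ∀ i, 1 ≤ i → i ≤ N → w i ^ (p - 1)
      = ∑ k ∈ range i, (w (k + 1) ^ (p - 1) - w k ^ (p - 1)) := by
    intro i _ _
    rw [Finset.sum_range_sub (fun k => w k ^ (p - 1)) i, hw0,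
      Real.zero_rpow (ne_of_gt hpm), sub_zero]
  calc ∑ i ∈ Icc 1 N, w i ^ p * μ i
      = ∑ i ∈ Icc 1 N, ∑ k ∈ range i, (w (k + 1) ^ p - w k ^ p) * μ i := by
        refine Finset.sum_congr rfl fun i hi => ?_
        rw [Finset.mem_Icc] at hi
        rw [htel i hi.1 hi.2, Finset.sum_mul]
    _ = ∑ k ∈ range N, ∑ i ∈ Icc (k + 1) N, (w (k + 1) ^ p - w k ^ p) * μ i :=
        sum_swap_tri N _
    _ ≤ ∑ k ∈ range N, p / (p - 1) *
          ∑ i ∈ Icc (k + 1) N, (w (k + 1) ^ (p - 1) - w k ^ (p - 1)) * I i := by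
        refine Finset.sum_le_sum fun k hk => ?_
        rw [Finset.mem_range] at hk
        have hk1 : 1 ≤ k + 1 := by omega
        have hkN : k + 1 ≤ N := by omega
        have hwk1 : 0 < w (k + 1) := hwpos _ hk1 hkN
        have hwk : 0 ≤ w k := hwnn k (by omega)
        have hwle : w k ≤ w (k + 1) := hwmono k (k + 1) (by omega) hkN
        have hG : (0:ℝ) ≤ ∑ i ∈ Icc (k + 1) N, μ i :=
          Finset.sum_nonneg fun i _ => hμ i
        have hI' : (0:ℝ) ≤ ∑ i ∈ Icc (k + 1) N, I i :=
          Finset.sum_nonneg fun i _ => hI i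
        have hD : (0:ℝ) ≤ w (k + 1) ^ (p - 1) - w k ^ (p - 1) :=
          sub_nonneg.2 (Real.rpow_le_rpow hwk hwle (le_of_lt hpm))
        have hkey := key_pow_ineq hp hwk hwle
        have hweak' := hweak (k + 1) hk1 hkN
        rw [← Finset.mul_sum, ← Finset.mul_sum]
        calc (w (k + 1) ^ p - w k ^ p) * ∑ i ∈ Icc (k + 1) N, μ i
            ≤ (p / (p - 1) * ((w (k + 1) ^ (p - 1) - w k ^ (p - 1)) * w (k + 1)))
              * ∑ i ∈ Icc (k + 1) N, μ i := mul_le_mul_of_nonneg_right hkey hG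
          _ = (p / (p - 1) * (w (k + 1) ^ (p - 1) - w k ^ (p - 1)))
              * (w (k + 1) * ∑ i ∈ Icc (k + 1) N, μ i) := by ring
          _ ≤ (p / (p - 1) * (w (k + 1) ^ (p - 1) - w k ^ (p - 1)))
              * ∑ i ∈ Icc (k + 1) N, I i :=
              mul_le_mul_of_nonneg_left hweak' (mul_nonneg hp' hD)
          _ = p / (p - 1) * ((w (k + 1) ^ (p - 1) - w k ^ (p - 1))
              * ∑ i ∈ Icc (k + 1) N, I i) := by ring
    _ = p / (p - 1) * ∑ i ∈ Icc 1 N, w i ^ (p - 1) * I i := by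
        rw [← Finset.mul_sum]
        congr 1
        rw [← sum_swap_tri N (fun i k => (w (k + 1) ^ (p - 1) - w k ^ (p - 1)) * I i)]
        refine Finset.sum_congr rfl fun i hi => ?_
        rw [Finset.mem_Icc] at hi
        rw [← Finset.sum_mul, ← htel' i hi.1 hi.2]

section Bridging

lemma list_sum_map_getD {A M : Type*} [AddCommMonoid M] (l : List A) (f : A → M) (d : A) :
    (l.map f).sum = ∑ i ∈ Finset.range l.length, f (l.getD i d) := by
  induction l with
  | nil => simp
  | cons a t ih =>
      rw [List.map_cons, List.sum_cons, List.length_cons, Finset.sum_range_succ']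
      simp only [List.getD_cons_succ, List.getD_cons_zero]
      rw [← ih, add_comm]

lemma finset_sum_eq_sum_getD {M : Type*} [AddCommMonoid M] (s : Finset ℝ≥0∞) (f : ℝ≥0∞ → M) :
    ∑ v ∈ s, f v = ∑ i ∈ Finset.Icc 1 (s.sort (· ≤ ·)).length,
      f ((s.sort (· ≤ ·)).getD (i - 1) 0) := by
  have h1 : ∑ v ∈ s, f v = ((s.sort (· ≤ ·)).map f).sum := by
    rw [← Finset.sum_map_toList]
    exact (List.Perm.sum_eq (List.Perm.map f (Finset.sort_perm_toList s _))).symm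
  rw [h1, list_sum_map_getD _ f 0]
  rw [← Finset.Ico_add_one_right_eq_Icc, Finset.sum_Ico_eq_sum_range]
  simp only [Nat.add_sub_cancel, Nat.succ_sub_one]
  refine Finset.sum_congr rfl fun i _ => ?_
  have h : 1 + i - 1 = i := by omega
  rw [h]

lemma sum_insert_zero_erase {M : Type*} [AddCommMonoid M] (s : Finset ℝ≥0∞)
    (f : ℝ≥0∞ → M) (hf0 : f 0 = 0) :
    ∑ v ∈ insert (0:ℝ≥0∞) s, f v = ∑ v ∈ s.erase 0, f v := by
  classical
  by_cases h0 : (0:ℝ≥0∞) ∈ s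
  · rw [Finset.insert_eq_self.2 h0]
    exact (Finset.sum_erase _ hf0).symm
  · rw [Finset.sum_insert h0, hf0, zero_add, Finset.erase_eq_of_notMem h0]

end Bridging

section MaximalLp

variable {α : Type*} [MeasurableSpace α] (σ : Measure α) (φ : α → ℝ≥0∞)

lemma maxFn_lintegral_rpow (hφ : Measurable φ) (T : Finset (Set α))
    (hTm : ∀ S ∈ T, MeasurableSet S)
    (hfin : ∀ S ∈ T, σ S ≠ ⊤)
    (hcomp : ∀ S ∈ T, ∀ S' ∈ T, (S ∩ S').Nonempty → S ⊆ S' ∨ S' ⊆ S)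
    (hint : ∫⁻ x in ⋃ S ∈ T, S, φ x ∂σ ≠ ⊤)
    (p : ℝ) (hp : 1 < p) :
    ∫⁻ x, maxFn σ φ T x ^ p ∂σ ≠ ⊤ ∧
    ∫⁻ x, maxFn σ φ T x ^ p ∂σ
      ≤ ENNReal.ofReal (p / (p - 1)) * ∫⁻ x, φ x * maxFn σ φ T x ^ (p - 1) ∂σ := by
  classical
  have hp0 : (0:ℝ) < p := by linarith
  have hpm : (0:ℝ) < p - 1 := by linarith
  set M : α → ℝ≥0∞ := maxFn σ φ T with hM_def
  have hM : Measurable M := measurable_maxFn σ φ hTm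
  have hUfin : σ (⋃ S ∈ T, S) ≠ ⊤ := by
    refine (lt_of_le_of_lt (measure_biUnion_finset_le T _) ?_).ne
    exact ENNReal.sum_lt_top.2 fun S hS => lt_top_iff_ne_top.2 (hfin S hS)
  have havg_ne_top : ∀ S ∈ T, avgOn σ φ S ≠ ⊤ := by
    intro S hS
    rcases eq_or_ne (σ S) 0 with h0 | h0
    · rw [avgOn, setLIntegral_measure_zero _ _ h0, mul_zero]
      exact ENNReal.zero_ne_top
    · rw [avgOn]
      refine ENNReal.mul_ne_top (ENNReal.inv_ne_top.2 h0) ?_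
      refine ne_top_of_le_ne_top hint (lintegral_mono_set ?_)
      intro y hy
      exact Set.mem_biUnion hS hy
  set V : Finset ℝ≥0∞ := (T.image (avgOn σ φ)).erase 0 with hV_def
  set Vall : Finset ℝ≥0∞ := insert 0 (T.image (avgOn σ φ)) with hVall_def
  have hrange : ∀ x, M x ∈ Vall := by
    intro x
    rcases Finset.eq_empty_or_nonempty T with h | h
    · have : M x = 0 := by rw [hM_def, h]; simp [maxFn]
      rw [this]; exact Finset.mem_insert_self _ _
    · obtain ⟨S, hS, hEq⟩ := Finset.exists_mem_eq_sup T h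
        (fun S => S.indicator (fun _ => avgOn σ φ S) x)
      rw [hM_def, maxFn, hEq]
      by_cases hx : x ∈ S
      · rw [Set.indicator_of_mem hx]
        exact Finset.mem_insert_of_mem (Finset.mem_image_of_mem _ hS)
      · rw [Set.indicator_of_notMem hx]
        exact Finset.mem_insert_self _ _
  have hVne0 : ∀ v ∈ V, v ≠ 0 := fun v hv => Finset.ne_of_mem_erase hv
  have hVnet : ∀ v ∈ V, v ≠ ⊤ := by
    intro v hv
    obtain ⟨S, hS, hSv⟩ := Finset.mem_image.1 (Finset.mem_of_mem_erase hv)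
    exact hSv ▸ havg_ne_top S hS
  have hpre_sub : ∀ v : ℝ≥0∞, v ≠ 0 → M ⁻¹' {v} ⊆ ⋃ S ∈ T, S := by
    intro v hv x hx
    by_contra hxn
    simp only [Set.mem_iUnion, exists_prop, not_exists, not_and] at hxn
    have h0 : M x = 0 := maxFn_eq_zero_of_forall_not_mem σ φ hxn
    rw [Set.mem_preimage, Set.mem_singleton_iff] at hx
    exact hv (hx.symm.trans h0)
  have hμfin : ∀ v ∈ V, σ (M ⁻¹' {v}) ≠ ⊤ := fun v hv =>
    ne_top_of_le_ne_top hUfin (measure_mono (hpre_sub v (hVne0 v hv)))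
  have hIfin : ∀ v ∈ V, (∫⁻ x in M ⁻¹' {v}, φ x ∂σ) ≠ ⊤ := fun v hv =>
    ne_top_of_le_ne_top hint (lintegral_mono_set (hpre_sub v (hVne0 v hv)))
  set L : List ℝ≥0∞ := V.sort (· ≤ ·) with hL_def
  set N : ℕ := L.length with hN_def
  set vv : ℕ → ℝ≥0∞ := fun i => L.getD (i - 1) 0 with hvv_def
  have hsorted : L.Pairwise (· < ·) := (Finset.sortedLT_sort V).pairwise
  have hmemL : ∀ i, 1 ≤ i → i ≤ N → vv i ∈ V := by
    intro i h1 h2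
    have hlt : i - 1 < L.length := by omega
    rw [hvv_def]
    simp only []
    rw [List.getD_eq_getElem L 0 hlt]
    exact (Finset.mem_sort _).1 (List.getElem_mem hlt)
  have hstrict : ∀ i j, 1 ≤ i → i < j → j ≤ N → vv i < vv j := by
    intro i j h1 h2 h3
    have hi : i - 1 < L.length := by omega
    have hj : j - 1 < L.length := by omega
    rw [hvv_def]
    simp only []
    rw [List.getD_eq_getElem L 0 hi, List.getD_eq_getElem L 0 hj]
    exact List.pairwise_iff_getElem.1 hsorted _ _ hi hj (by omega)
  have hle_iff : ∀ i j, 1 ≤ i → i ≤ N → 1 ≤ j → j ≤ N → (vv i ≤ vv j ↔ i ≤ j) := by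
    intro i j hi1 hiN hj1 hjN
    constructor
    · intro h
      by_contra hij
      exact absurd h (not_le.2 (hstrict j i hj1 (by omega) hiN))
    · intro h
      rcases eq_or_lt_of_le h with h' | h'
      · rw [h']
      · exact (hstrict i j hi1 h' hjN).le
  set wR : ℕ → ℝ := fun i => if i = 0 then 0 else (vv i).toReal with hwR_def
  set μR : ℕ → ℝ := fun i => (σ (M ⁻¹' {vv i})).toReal with hμR_def
  set IR : ℕ → ℝ := fun i => (∫⁻ x in M ⁻¹' {vv i}, φ x ∂σ).toReal with hIR_def
  -- the filter bridge
  have hbridge : ∀ i, 1 ≤ i → i ≤ N → ∀ (F : ℝ≥0∞ → ℝ≥0∞),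
      ∑ u ∈ V.filter (fun u => vv i ≤ u), F u = ∑ j ∈ Finset.Icc i N, F (vv j) := by
    intro i hi1 hiN F
    rw [Finset.sum_filter]
    rw [finset_sum_eq_sum_getD V (fun u => if vv i ≤ u then F u else 0)]
    rw [← hL_def, ← hN_def]
    have : ∀ j ∈ Finset.Icc 1 N,
        (if vv i ≤ L.getD (j-1) 0 then F (L.getD (j-1) 0) else 0)
          = if vv i ≤ vv j then F (vv j) else 0 := by
      intro j _; rfl
    rw [Finset.sum_congr rfl this, ← Finset.sum_filter]
    apply Finset.sum_congr _ (fun j _ => rfl)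
    ext j
    simp only [Finset.mem_filter, Finset.mem_Icc]
    constructor
    · rintro ⟨⟨hj1, hjN⟩, hle⟩
      exact ⟨(hle_iff i j hi1 hiN hj1 hjN).1 hle, hjN⟩
    · rintro ⟨hij, hjN⟩
      have hj1 : 1 ≤ j := le_trans hi1 hij
      exact ⟨⟨hj1, hjN⟩, (hle_iff i j hi1 hiN hj1 hjN).2 hij⟩
  -- weak-type hypothesis in real form
  have hweakR : ∀ i, 1 ≤ i → i ≤ N →
      wR i * (∑ j ∈ Finset.Icc i N, μR j) ≤ ∑ j ∈ Finset.Icc i N, IR j := by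
    intro i hi1 hiN
    have hvmem := hmemL i hi1 hiN
    have hv0 : vv i ≠ 0 := hVne0 _ hvmem
    have hvt : vv i ≠ ⊤ := hVnet _ hvmem
    have hwt := maxFn_weak_type σ φ hTm hcomp hv0 hvt
    have hmul : vv i * σ {x | vv i ≤ M x} ≤ ∫⁻ x in {x | vv i ≤ M x}, φ x ∂σ := by
      calc vv i * σ {x | vv i ≤ M x}
          ≤ vv i * ((vv i)⁻¹ * ∫⁻ x in {x | vv i ≤ M x}, φ x ∂σ) :=
            mul_le_mul_right hwt _
        _ = ∫⁻ x in {x | vv i ≤ M x}, φ x ∂σ := by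
            rw [← mul_assoc, ENNReal.mul_inv_cancel hv0 hvt, one_mul]
    have hfilter_eq : Vall.filter (fun u => vv i ≤ u) = V.filter (fun u => vv i ≤ u) := by
      ext u
      simp only [Finset.mem_filter, hVall_def, hV_def, Finset.mem_insert, Finset.mem_erase]
      constructor
      · rintro ⟨hu, hle⟩
        have hu0 : u ≠ 0 := by
          intro h; rw [h] at hle; exact hv0 (le_antisymm hle (zero_le))
        rcases hu with h | h
        · exact absurd h hu0
        · exact ⟨⟨hu0, h⟩, hle⟩
      · rintro ⟨⟨_, hu⟩, hle⟩
        exact ⟨Or.inr hu, hle⟩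
    have hdecomp := levelset_eq_biUnion M Vall hrange (vv i)
    rw [hfilter_eq] at hdecomp
    have hsub : (↑(V.filter (fun u => vv i ≤ u)) : Set ℝ≥0∞) ⊆ ↑V :=
      Finset.coe_subset.2 (Finset.filter_subset _ _)
    have hmeasσ : σ {x | vv i ≤ M x} = ∑ u ∈ V.filter (fun u => vv i ≤ u), σ (M ⁻¹' {u}) := by
      rw [hdecomp]
      exact measure_biUnion_finset ((pairwiseDisjoint_preimage M V).subset hsub)
        (fun u _ => hM (measurableSet_singleton u))
    have hintσ : ∫⁻ x in {x | vv i ≤ M x}, φ x ∂σ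
        = ∑ u ∈ V.filter (fun u => vv i ≤ u), ∫⁻ x in M ⁻¹' {u}, φ x ∂σ := by
      rw [hdecomp]
      exact lintegral_biUnion_finset ((pairwiseDisjoint_preimage M V).subset hsub)
        (fun u _ => hM (measurableSet_singleton u)) φ
    rw [hmeasσ, hintσ, hbridge i hi1 hiN (fun u => σ (M ⁻¹' {u})),
      hbridge i hi1 hiN (fun u => ∫⁻ x in M ⁻¹' {u}, φ x ∂σ)] at hmul
    have hjfacts : ∀ j ∈ Finset.Icc i N,
        σ (M ⁻¹' {vv j}) ≠ ⊤ ∧ (∫⁻ x in M ⁻¹' {vv j}, φ x ∂σ) ≠ ⊤ := by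
      intro j hj
      rw [Finset.mem_Icc] at hj
      have hm := hmemL j (le_trans hi1 hj.1) hj.2
      exact ⟨hμfin _ hm, hIfin _ hm⟩
    have hRHSne : (∑ j ∈ Finset.Icc i N, ∫⁻ x in M ⁻¹' {vv j}, φ x ∂σ) ≠ ⊤ :=
      (ENNReal.sum_lt_top.2 fun j hj => lt_top_iff_ne_top.2 (hjfacts j hj).2).ne
    have hreal := ENNReal.toReal_mono hRHSne hmul
    rw [ENNReal.toReal_mul, ENNReal.toReal_sum (fun j hj => (hjfacts j hj).1),
      ENNReal.toReal_sum (fun j hj => (hjfacts j hj).2)] at hreal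
    have hwR_eq : wR i = (vv i).toReal := by
      rw [hwR_def]; simp only []; rw [if_neg (by omega)]
    rw [hwR_eq]
    exact hreal
  have habs := abstract_layercake p hp N wR μR IR
    (by simp [hwR_def])
    (fun i h1 h2 => by
      rw [hwR_def]; simp only []; rw [if_neg (by omega)]
      exact ENNReal.toReal_pos (hVne0 _ (hmemL i h1 h2)) (hVnet _ (hmemL i h1 h2)))
    (fun i j hij hjN => by
      rw [hwR_def]; simp only []
      rcases Nat.eq_zero_or_pos i with h0 | h0
      · subst h0
        rw [if_pos rfl]
        split
        · exact le_refl 0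
        · exact ENNReal.toReal_nonneg
      · rw [if_neg (by omega), if_neg (by omega)]
        have hj1 : 1 ≤ j := le_trans h0 hij
        rcases eq_or_lt_of_le hij with he | hl
        · rw [he]
        · exact ENNReal.toReal_mono (hVnet _ (hmemL j hj1 hjN)) (hstrict i j h0 hl hjN).le)
    (fun i => ENNReal.toReal_nonneg)
    (fun i => ENNReal.toReal_nonneg)
    hweakR
  have hXrepr : ∫⁻ x, M x ^ p ∂σ
      = ∑ j ∈ Finset.Icc 1 N, (vv j) ^ p * σ (M ⁻¹' {vv j}) := by
    rw [lintegral_comp_finite_range σ M hM Vall hrange (fun v => v ^ p)]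
    rw [hVall_def, sum_insert_zero_erase _ _
      (by rw [ENNReal.zero_rpow_of_pos hp0, zero_mul]), ← hV_def]
    exact finset_sum_eq_sum_getD V (fun v => v ^ p * σ (M ⁻¹' {v}))
  have hYrepr : ∫⁻ x, φ x * M x ^ (p - 1) ∂σ
      = ∑ j ∈ Finset.Icc 1 N, (vv j) ^ (p - 1) * ∫⁻ x in M ⁻¹' {vv j}, φ x ∂σ := by
    rw [lintegral_mul_comp_finite_range σ M φ hM hφ Vall hrange (fun v => v ^ (p - 1))]
    rw [hVall_def, sum_insert_zero_erase _ _
      (by rw [ENNReal.zero_rpow_of_pos hpm, zero_mul]), ← hV_def]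
    exact finset_sum_eq_sum_getD V (fun v => v ^ (p - 1) * ∫⁻ x in M ⁻¹' {v}, φ x ∂σ)
  have hmemIcc : ∀ j ∈ Finset.Icc 1 N, vv j ∈ V := by
    intro j hj
    rw [Finset.mem_Icc] at hj
    exact hmemL j hj.1 hj.2
  have hXfin : (∑ j ∈ Finset.Icc 1 N, (vv j) ^ p * σ (M ⁻¹' {vv j})) ≠ ⊤ := by
    refine (ENNReal.sum_lt_top.2 fun j hj => ?_).ne
    have hm := hmemIcc j hj
    exact ENNReal.mul_lt_top
      (ENNReal.rpow_lt_top_of_nonneg hp0.le (hVnet _ hm))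
      (lt_top_iff_ne_top.2 (hμfin _ hm))
  have hYfin : (∑ j ∈ Finset.Icc 1 N, (vv j) ^ (p - 1) * ∫⁻ x in M ⁻¹' {vv j}, φ x ∂σ) ≠ ⊤ := by
    refine (ENNReal.sum_lt_top.2 fun j hj => ?_).ne
    have hm := hmemIcc j hj
    exact ENNReal.mul_lt_top
      (ENNReal.rpow_lt_top_of_nonneg hpm.le (hVnet _ hm))
      (lt_top_iff_ne_top.2 (hIfin _ hm))
  have hXreal : (∑ j ∈ Finset.Icc 1 N, (vv j) ^ p * σ (M ⁻¹' {vv j})).toReal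
      = ∑ j ∈ Finset.Icc 1 N, wR j ^ p * μR j := by
    rw [ENNReal.toReal_sum (fun j hj => by
      have hm := hmemIcc j hj
      exact ENNReal.mul_ne_top
        (ENNReal.rpow_lt_top_of_nonneg hp0.le (hVnet _ hm)).ne (hμfin _ hm))]
    refine Finset.sum_congr rfl fun j hj => ?_
    rw [Finset.mem_Icc] at hj
    rw [ENNReal.toReal_mul, ← ENNReal.toReal_rpow]
    have : wR j = (vv j).toReal := by
      rw [hwR_def]; simp only []; rw [if_neg (by omega)]
    rw [this, hμR_def]
  have hYreal : (∑ j ∈ Finset.Icc 1 N, (vv j) ^ (p - 1) * ∫⁻ x in M ⁻¹' {vv j}, φ x ∂σ).toReal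
      = ∑ j ∈ Finset.Icc 1 N, wR j ^ (p - 1) * IR j := by
    rw [ENNReal.toReal_sum (fun j hj => by
      have hm := hmemIcc j hj
      exact ENNReal.mul_ne_top
        (ENNReal.rpow_lt_top_of_nonneg hpm.le (hVnet _ hm)).ne (hIfin _ hm))]
    refine Finset.sum_congr rfl fun j hj => ?_
    rw [Finset.mem_Icc] at hj
    rw [ENNReal.toReal_mul, ← ENNReal.toReal_rpow]
    have : wR j = (vv j).toReal := by
      rw [hwR_def]; simp only []; rw [if_neg (by omega)]
    rw [this, hIR_def]
  constructor
  · rw [hXrepr]; exact hXfin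
  · rw [hXrepr, hYrepr]
    calc (∑ j ∈ Finset.Icc 1 N, (vv j) ^ p * σ (M ⁻¹' {vv j}))
        = ENNReal.ofReal ((∑ j ∈ Finset.Icc 1 N, (vv j) ^ p * σ (M ⁻¹' {vv j})).toReal) :=
          (ENNReal.ofReal_toReal hXfin).symm
      _ ≤ ENNReal.ofReal (p / (p - 1) * ∑ j ∈ Finset.Icc 1 N, wR j ^ (p - 1) * IR j) := by
          refine ENNReal.ofReal_le_ofReal ?_
          rw [hXreal]
          exact habs
      _ = ENNReal.ofReal (p / (p - 1))
            * ENNReal.ofReal (∑ j ∈ Finset.Icc 1 N, wR j ^ (p - 1) * IR j) :=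
          ENNReal.ofReal_mul (by positivity)
      _ = ENNReal.ofReal (p / (p - 1))
            * (∑ j ∈ Finset.Icc 1 N, (vv j) ^ (p - 1) * ∫⁻ x in M ⁻¹' {vv j}, φ x ∂σ) := by
          rw [← hYreal, ENNReal.ofReal_toReal hYfin]

lemma maxFn_Lp_bound (hφ : Measurable φ) (T : Finset (Set α))
    (hTm : ∀ S ∈ T, MeasurableSet S)
    (hfin : ∀ S ∈ T, σ S ≠ ⊤)
    (hcomp : ∀ S ∈ T, ∀ S' ∈ T, (S ∩ S').Nonempty → S ⊆ S' ∨ S' ⊆ S)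
    (hint : ∫⁻ x in ⋃ S ∈ T, S, φ x ∂σ ≠ ⊤)
    (p : ℝ) (hp : 1 < p) :
    ∫⁻ x, maxFn σ φ T x ^ p ∂σ
      ≤ ENNReal.ofReal (p / (p - 1)) ^ p * ∫⁻ x, φ x ^ p ∂σ := by
  obtain ⟨hXfin, hbound⟩ := maxFn_lintegral_rpow σ φ hφ T hTm hfin hcomp hint p hp
  have hp0 : (0:ℝ) < p := by linarith
  set M : α → ℝ≥0∞ := maxFn σ φ T with hM_def
  have hM : Measurable M := measurable_maxFn σ φ hTm
  set X := ∫⁻ x, M x ^ p ∂σ with hX_def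
  set A := ∫⁻ x, φ x ^ p ∂σ with hA_def
  rcases eq_or_ne X 0 with h0 | h0
  · exact h0 ▸ zero_le
  have hconj : p.HolderConjugate (p / (p - 1)) := by
    have := Real.HolderConjugate.conjExponent hp
    rwa [Real.conjExponent] at this
  have hH := ENNReal.lintegral_mul_le_Lp_mul_Lq σ hconj hφ.aemeasurable
    ((hM.pow_const (p - 1)).aemeasurable)
  simp only [Pi.mul_apply] at hH
  have hexp : (∫⁻ x, (M x ^ (p - 1)) ^ (p / (p - 1)) ∂σ) = X := by
    rw [hX_def]
    congr 1
    funext x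
    rw [← ENNReal.rpow_mul]
    congr 1
    have hne : p - 1 ≠ 0 := by linarith
    field_simp
  rw [hexp] at hH
  rcases eq_or_ne A ⊤ with hA | hA
  · rw [hA, ENNReal.mul_top]
    · exact le_top
    · exact (ENNReal.rpow_pos (ENNReal.ofReal_pos.2 hconj.symm.pos) ENNReal.ofReal_ne_top).ne'
  have hchain : X ≤ (ENNReal.ofReal (p / (p - 1)) * A ^ (1 / p)) * X ^ (1 / (p / (p - 1))) := by
    calc X ≤ ENNReal.ofReal (p / (p - 1)) * ∫⁻ x, φ x * M x ^ (p - 1) ∂σ := hbound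
      _ ≤ ENNReal.ofReal (p / (p - 1)) * (A ^ (1 / p) * X ^ (1 / (p / (p - 1)))) :=
          mul_le_mul_right hH _
      _ = (ENNReal.ofReal (p / (p - 1)) * A ^ (1 / p)) * X ^ (1 / (p / (p - 1))) := by
          rw [mul_assoc]
  have h1q : 1 / p + 1 / (p / (p - 1)) = 1 := by
    rw [one_div, one_div]
    exact hconj.inv_add_inv_eq_one
  have hXsplit : X ^ (1 / p) * X ^ (1 / (p / (p - 1))) = X := by
    rw [← ENNReal.rpow_add _ _ h0 hXfin, h1q, ENNReal.rpow_one]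
  have hXq0 : X ^ (1 / (p / (p - 1))) ≠ 0 :=
    (ENNReal.rpow_pos (zero_lt_iff.2 h0) hXfin).ne'
  have hXqt : X ^ (1 / (p / (p - 1))) ≠ ⊤ :=
    ENNReal.rpow_ne_top_of_nonneg (one_div_pos.2 hconj.symm.pos).le hXfin
  have hfinal1 : X ^ (1 / p) ≤ ENNReal.ofReal (p / (p - 1)) * A ^ (1 / p) :=
    (ENNReal.mul_le_mul_iff_left hXq0 hXqt).1 (hXsplit.symm ▸ hchain)
  have hXpow : (X ^ (1 / p)) ^ p = X := by
    rw [← ENNReal.rpow_mul, one_div, inv_mul_cancel₀ (ne_of_gt hp0), ENNReal.rpow_one]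
  calc X = (X ^ (1 / p)) ^ p := hXpow.symm
    _ ≤ (ENNReal.ofReal (p / (p - 1)) * A ^ (1 / p)) ^ p :=
        ENNReal.rpow_le_rpow hfinal1 hp0.le
    _ = ENNReal.ofReal (p / (p - 1)) ^ p * (A ^ (1 / p)) ^ p :=
        ENNReal.mul_rpow_of_nonneg _ _ hp0.le
    _ = ENNReal.ofReal (p / (p - 1)) ^ p * A := by
        rw [← ENNReal.rpow_mul, one_div, inv_mul_cancel₀ (ne_of_gt hp0), ENNReal.rpow_one]

end MaximalLp

section MainAux

variable {n : ℕ}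

instance : Countable (DyadicCube n) := by
  refine Function.Injective.countable (f := fun Q : DyadicCube n => (Q.k, Q.m)) ?_
  rintro ⟨k1, m1⟩ ⟨k2, m2⟩ h
  simp only [Prod.mk.injEq] at h
  obtain ⟨h1, h2⟩ := h
  subst h1; subst h2; rfl

lemma dSum_eq_sum (lam : DyadicCube n → ℝ≥0∞) (F : Finset (DyadicCube n))
    (hF : ∀ Q ∉ F, lam Q = 0) (x : Fin n → ℝ) :
    dSum lam x = ∑ Q ∈ F, Q.toSet.indicator (fun _ => lam Q) x := by
  refine tsum_eq_sum fun Q hQ => ?_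
  rw [hF Q hQ]
  simp

lemma dSum_measurable (lam : DyadicCube n → ℝ≥0∞) (F : Finset (DyadicCube n))
    (hF : ∀ Q ∉ F, lam Q = 0) : Measurable (dSum lam) := by
  have h : dSum lam = fun x => ∑ Q ∈ F, Q.toSet.indicator (fun _ => lam Q) x :=
    funext (dSum_eq_sum lam F hF)
  rw [h]
  exact Finset.measurable_sum _ fun Q _ =>
    Measurable.indicator measurable_const Q.measurableSet_toSet

lemma dSumIn_le_dSum (lam : DyadicCube n → ℝ≥0∞) (R : DyadicCube n) (x : Fin n → ℝ) :
    dSumIn lam R x ≤ dSum lam x := by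
  unfold dSumIn dSum
  exact ENNReal.tsum_comp_le_tsum_of_injective (Subtype.val_injective)
    (fun Q : DyadicCube n => Q.toSet.indicator (fun _ => lam Q) x)

end MainAux

/-- Lemma 3.2(i), case `r ≥ 1`, `0 < q < r`:
`Σ_R λ_R σ(R) ((1/σ(R)) ∫_R (Σ_{Q⊆R} λ_Q χ_Q)^q dσ)^{(r-1)/q} ≤ C(r,q) ∫ (Σ_Q λ_Q χ_Q)^r dσ`. -/
theorem a4_le_a1_ge_one (r q : ℝ) (hr : 1 ≤ r) (hq : 0 < q) (hqr : q < r) :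
    ∃ C : ℝ≥0∞, C ≠ ⊤ ∧
      ∀ (n : ℕ) (σ : Measure (Fin n → ℝ)) [IsLocallyFiniteMeasure σ]
        (lam : DyadicCube n → ℝ≥0∞),
        (Function.support lam).Finite → (∀ Q, lam Q ≠ ⊤) →
        (∀ Q : DyadicCube n, σ Q.toSet = 0 → lam Q = 0) →
        (∑' R : DyadicCube n, lam R * σ R.toSet *
            ((σ R.toSet)⁻¹ * ∫⁻ x in R.toSet, (dSumIn lam R x) ^ q ∂σ) ^ ((r - 1) / q))
          ≤ C * ∫⁻ x, (dSum lam x) ^ r ∂σ := by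
  classical
  rcases eq_or_lt_of_le hr with hr1 | hr1
  · -- case r = 1
    refine ⟨1, ENNReal.one_ne_top, ?_⟩
    intro n σ _ lam hsupp hlamt hlam0
    subst hr1
    have he : (1 - 1 : ℝ) / q = 0 := by norm_num
    have hL : (∑' R : DyadicCube n, lam R * σ R.toSet *
        ((σ R.toSet)⁻¹ * ∫⁻ x in R.toSet, (dSumIn lam R x) ^ q ∂σ) ^ ((1 - 1 : ℝ) / q))
        = ∑' R : DyadicCube n, lam R * σ R.toSet := by
      refine tsum_congr fun R => ?_
      rw [he, ENNReal.rpow_zero, mul_one]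
    have hR : (∫⁻ x, (dSum lam x) ^ (1:ℝ) ∂σ) = ∑' Q : DyadicCube n, lam Q * σ Q.toSet := by
      have h1 : (∫⁻ x, (dSum lam x) ^ (1:ℝ) ∂σ) = ∫⁻ x, dSum lam x ∂σ := by
        congr 1; funext x; rw [ENNReal.rpow_one]
      rw [h1]
      unfold dSum
      rw [lintegral_tsum fun Q =>
        (Measurable.indicator measurable_const Q.measurableSet_toSet).aemeasurable]
      refine tsum_congr fun Q => ?_
      rw [lintegral_indicator Q.measurableSet_toSet, setLIntegral_const]
    rw [hL, hR, one_mul]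
  · -- case 1 < r
    have hrq : (0:ℝ) < r := by linarith
    have hrm : (0:ℝ) < r - 1 := by linarith
    set p : ℝ := r / q with hp_def
    have hp1 : 1 < p := (one_lt_div hq).2 hqr
    have hp0 : (0:ℝ) < p := by linarith
    set Cp : ℝ≥0∞ := ENNReal.ofReal (p / (p - 1)) ^ p with hCp_def
    have hCpt : Cp ≠ ⊤ := ENNReal.rpow_ne_top_of_nonneg hp0.le ENNReal.ofReal_ne_top
    refine ⟨Cp + 1, by simp [hCpt], ?_⟩
    intro n σ _ lam hsupp hlamt hlam0
    set F : Finset (DyadicCube n) := hsupp.toFinset with hF_def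
    have hFm : ∀ Q : DyadicCube n, Q ∈ F ↔ lam Q ≠ 0 := fun Q => hsupp.mem_toFinset
    have hFout : ∀ Q ∉ F, lam Q = 0 := fun Q hQ => not_not.1 ((hFm Q).not.1 hQ)
    set φ : (Fin n → ℝ) → ℝ≥0∞ := fun x => dSum lam x ^ q with hφ_def
    set T : Finset (Set (Fin n → ℝ)) := F.image DyadicCube.toSet with hT_def
    have hTm : ∀ S ∈ T, MeasurableSet S := by
      intro S hS
      obtain ⟨Q, _, rfl⟩ := Finset.mem_image.1 hS
      exact Q.measurableSet_toSet
    have hfinT : ∀ S ∈ T, σ S ≠ ⊤ := by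
      intro S hS
      obtain ⟨Q, _, rfl⟩ := Finset.mem_image.1 hS
      exact (Q.measure_lt_top σ).ne
    have hcompT : ∀ S ∈ T, ∀ S' ∈ T, (S ∩ S').Nonempty → S ⊆ S' ∨ S' ⊆ S := by
      intro S hS S' hS' hne
      obtain ⟨Q, _, rfl⟩ := Finset.mem_image.1 hS
      obtain ⟨Q', _, rfl⟩ := Finset.mem_image.1 hS'
      exact DyadicCube.subset_or_subset hne
    have hmeas_dSum : Measurable (dSum lam) := dSum_measurable lam F hFout
    have hφm : Measurable φ := hmeas_dSum.pow_const q
    set B : ℝ≥0∞ := (∑ Q ∈ F, lam Q) ^ q with hB_def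
    have hBt : B ≠ ⊤ :=
      ENNReal.rpow_ne_top_of_nonneg hq.le
        (ENNReal.sum_lt_top.2 fun Q _ => lt_top_iff_ne_top.2 (hlamt Q)).ne
    have hφB : ∀ x, φ x ≤ B := by
      intro x
      refine ENNReal.rpow_le_rpow ?_ hq.le
      rw [dSum_eq_sum lam F hFout x]
      exact Finset.sum_le_sum fun Q _ => Set.indicator_le_self' (fun _ _ => zero_le) x
    have hUfin : σ (⋃ S ∈ T, S) ≠ ⊤ := by
      refine (lt_of_le_of_lt (measure_biUnion_finset_le T _) ?_).ne
      exact ENNReal.sum_lt_top.2 fun S hS => lt_top_iff_ne_top.2 (hfinT S hS)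
    have hint : ∫⁻ x in ⋃ S ∈ T, S, φ x ∂σ ≠ ⊤ := by
      refine ne_top_of_le_ne_top ?_ (lintegral_mono fun x => hφB x)
      rw [setLIntegral_const]
      exact ENNReal.mul_ne_top hBt hUfin
    set M : (Fin n → ℝ) → ℝ≥0∞ := maxFn σ φ T with hM_def
    have hM : Measurable M := measurable_maxFn σ φ hTm
    set e : ℝ := (r - 1) / q with he_def
    have he0 : 0 < e := by positivity
    -- step 1 : tsum to finite sum
    have hLHS : (∑' R : DyadicCube n, lam R * σ R.toSet *
        ((σ R.toSet)⁻¹ * ∫⁻ x in R.toSet, (dSumIn lam R x) ^ q ∂σ) ^ e)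
        = ∑ R ∈ F, lam R * σ R.toSet *
          ((σ R.toSet)⁻¹ * ∫⁻ x in R.toSet, (dSumIn lam R x) ^ q ∂σ) ^ e := by
      refine tsum_eq_sum fun R hR => ?_
      rw [hFout R hR, zero_mul, zero_mul]
    -- step 2 : termwise bound
    have hterm : ∀ R ∈ F, lam R * σ R.toSet *
        ((σ R.toSet)⁻¹ * ∫⁻ x in R.toSet, (dSumIn lam R x) ^ q ∂σ) ^ e
        ≤ ∫⁻ x in R.toSet, lam R * M x ^ e ∂σ := by
      intro R hR
      have hRT : R.toSet ∈ T := Finset.mem_image_of_mem _ hR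
      set aR : ℝ≥0∞ := (σ R.toSet)⁻¹ * ∫⁻ x in R.toSet, (dSumIn lam R x) ^ q ∂σ with haR_def
      have haR : aR ≤ avgOn σ φ R.toSet := by
        refine mul_le_mul_right (lintegral_mono fun x => ?_) _
        exact ENNReal.rpow_le_rpow (dSumIn_le_dSum lam R x) hq.le
      calc lam R * σ R.toSet * aR ^ e
          = ∫⁻ _ in R.toSet, lam R * aR ^ e ∂σ := by
            rw [setLIntegral_const]; ring
        _ ≤ ∫⁻ x in R.toSet, lam R * M x ^ e ∂σ := by
            refine setLIntegral_mono (measurable_const.mul (hM.pow_const e)) fun x hx => ?_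
            refine mul_le_mul_right (ENNReal.rpow_le_rpow ?_ he0.le) _
            exact le_trans haR (avgOn_le_maxFn σ φ hRT hx)
    -- step 3 : sum of integrals
    have hsum_int : (∑ R ∈ F, ∫⁻ x in R.toSet, lam R * M x ^ e ∂σ)
        = ∫⁻ x, dSum lam x * M x ^ e ∂σ := by
      have h1 : ∀ R ∈ F, (∫⁻ x in R.toSet, lam R * M x ^ e ∂σ)
          = ∫⁻ x, R.toSet.indicator (fun y => lam R * M y ^ e) x ∂σ := fun R _ =>
        (lintegral_indicator R.measurableSet_toSet _).symm
      rw [Finset.sum_congr rfl h1, ← lintegral_finset_sum F (f := fun (R : DyadicCube n) y => R.toSet.indicator (fun y => lam R * M y ^ e) y) (fun R _ =>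
        Measurable.indicator (measurable_const.mul (hM.pow_const e)) R.measurableSet_toSet)]
      congr 1
      funext x
      have h2 : ∀ R : DyadicCube n, R.toSet.indicator (fun y => lam R * M y ^ e) x
          = R.toSet.indicator (fun _ => lam R) x * M x ^ e := by
        intro R
        by_cases hx : x ∈ R.toSet
        · rw [Set.indicator_of_mem hx, Set.indicator_of_mem hx]
        · rw [Set.indicator_of_notMem hx, Set.indicator_of_notMem hx, zero_mul]
      rw [Finset.sum_congr rfl (fun R _ => h2 R), ← Finset.sum_mul,
        ← dSum_eq_sum lam F hFout x]
    -- step 4 : Hölder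
    have hconj : r.HolderConjugate (r / (r - 1)) := by
      have := Real.HolderConjugate.conjExponent hr1
      rwa [Real.conjExponent] at this
    have hHold := ENNReal.lintegral_mul_le_Lp_mul_Lq σ hconj hmeas_dSum.aemeasurable
      ((hM.pow_const e).aemeasurable)
    simp only [Pi.mul_apply] at hHold
    have hMe : (∫⁻ x, (M x ^ e) ^ (r / (r - 1)) ∂σ) = ∫⁻ x, M x ^ p ∂σ := by
      congr 1
      funext x
      rw [← ENNReal.rpow_mul]
      congr 1
      rw [he_def, hp_def]
      field_simp
    rw [hMe] at hHold
    -- step 5 : maximal Lp bound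
    have hLp := maxFn_Lp_bound σ φ hφm T hTm hfinT hcompT hint p hp1
    have hφp : (∫⁻ x, φ x ^ p ∂σ) = ∫⁻ x, dSum lam x ^ r ∂σ := by
      congr 1
      funext x
      rw [hφ_def]
      rw [← ENNReal.rpow_mul]
      congr 1
      rw [hp_def]
      field_simp
    rw [hφp] at hLp
    rw [← hCp_def] at hLp
    set Y : ℝ≥0∞ := ∫⁻ x, dSum lam x ^ r ∂σ with hY_def
    -- final arithmetic
    have hrc1 : 1 ≤ r / (r - 1) := hconj.symm.lt.le
    have hrcpos : 0 < r / (r - 1) := hconj.symm.pos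
    have hCp1 : Cp ^ (1 / (r / (r - 1))) ≤ Cp + 1 := by
      rcases le_total Cp 1 with h | h
      · exact le_trans (ENNReal.rpow_le_one h (by positivity)) le_add_self
      · calc Cp ^ (1 / (r / (r - 1))) ≤ Cp ^ (1:ℝ) := by
              refine ENNReal.rpow_le_rpow_of_exponent_le h ?_
              rw [div_le_one hrcpos]
              exact hrc1
          _ = Cp := ENNReal.rpow_one Cp
          _ ≤ Cp + 1 := le_self_add
    have hfinal : Y ^ (1 / r) * (Cp * Y) ^ (1 / (r / (r - 1))) ≤ (Cp + 1) * Y := by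
      rcases eq_or_ne Y 0 with hY0 | hY0
      · rw [hY0, ENNReal.zero_rpow_of_pos (by positivity), zero_mul]
        exact zero_le
      rcases eq_or_ne Y ⊤ with hYt | hYt
      · rw [hYt, ENNReal.mul_top (by simp : Cp + 1 ≠ 0)]
        exact le_top
      rw [ENNReal.mul_rpow_of_nonneg _ _ (by positivity)]
      calc Y ^ (1 / r) * (Cp ^ (1 / (r / (r - 1))) * Y ^ (1 / (r / (r - 1))))
          = Cp ^ (1 / (r / (r - 1))) * (Y ^ (1 / r) * Y ^ (1 / (r / (r - 1)))) := by ring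
        _ = Cp ^ (1 / (r / (r - 1))) * Y := by
            rw [← ENNReal.rpow_add _ _ hY0 hYt]
            rw [show 1 / r + 1 / (r / (r - 1)) = 1 by
              rw [one_div, one_div]; exact hconj.inv_add_inv_eq_one]
            rw [ENNReal.rpow_one]
        _ ≤ (Cp + 1) * Y := mul_le_mul_left hCp1 Y
    calc (∑' R : DyadicCube n, lam R * σ R.toSet *
        ((σ R.toSet)⁻¹ * ∫⁻ x in R.toSet, (dSumIn lam R x) ^ q ∂σ) ^ e)
        = ∑ R ∈ F, lam R * σ R.toSet *
          ((σ R.toSet)⁻¹ * ∫⁻ x in R.toSet, (dSumIn lam R x) ^ q ∂σ) ^ e := hLHS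
      _ ≤ ∑ R ∈ F, ∫⁻ x in R.toSet, lam R * M x ^ e ∂σ := Finset.sum_le_sum hterm
      _ = ∫⁻ x, dSum lam x * M x ^ e ∂σ := hsum_int
      _ ≤ (∫⁻ x, dSum lam x ^ r ∂σ) ^ (1 / r)
            * (∫⁻ x, M x ^ p ∂σ) ^ (1 / (r / (r - 1))) := hHold
      _ ≤ Y ^ (1 / r) * (Cp * Y) ^ (1 / (r / (r - 1))) := by
          refine mul_le_mul_right (ENNReal.rpow_le_rpow hLp (by positivity)) _
      _ ≤ (Cp + 1) * Y := hfinal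
end

section
/- Let σ be a locally finite Borel measure on ℝⁿ, 0 < r < 1, and let D be the dyadic cubes of positive σ-measure. For finitely supported nonnegative (λ_Q)_{Q∈D}, define a₁(Λ) = ∫ (Σ_{Q∈D} λ_Q χ_Q)^r dσ and a₃(Λ) = sup{ Σ_{R∈D} λ_R^r ν_R }, the supremum over all nonnegative sequences (ν_R) with ν_Q = 0 when σ(Q) = 0 and satisfying the Carleson condition Σ_{Q⊆P} (ν_Q/σ(Q))^{1/(1−r)} σ(Q) ≤ σ(P) for every P ∈ D. Then (1/C) a₃(Λ) ≤ a₁(Λ) ≤ C a₃(Λ) with C = C(r) > 0. -/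
open MeasureTheory Set
open scoped ENNReal

namespace A1A3

instance {n : ℕ} : Countable (DyadicCube n) := by
  have : Function.Injective (fun Q : DyadicCube n => (Q.k, Q.m)) := by
    intro ⟨a,b⟩ ⟨c,d⟩ h; simp_all
  exact this.countable

-- 1D interval facts
lemma int_facts {k k' : ℤ} (h : k ≤ k') {m m' : ℤ} {t : ℝ}
    (h1 : (m : ℝ) * 2 ^ (-k) ≤ t) (h2 : t < ((m : ℝ) + 1) * 2 ^ (-k))
    (h1' : (m' : ℝ) * 2 ^ (-k') ≤ t) (h2' : t < ((m' : ℝ) + 1) * 2 ^ (-k')) :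
    (m : ℝ) * 2 ^ (-k) ≤ (m' : ℝ) * 2 ^ (-k') ∧
      ((m' : ℝ) + 1) * 2 ^ (-k') ≤ ((m : ℝ) + 1) * 2 ^ (-k) := by
  have h2pos : ∀ j : ℤ, (0:ℝ) < 2 ^ j := fun j => zpow_pos (by norm_num) j
  have key : (2:ℝ) ^ (-k) = 2 ^ (k' - k) * 2 ^ (-k') := by
    rw [← zpow_add₀ (by norm_num : (2:ℝ) ≠ 0)]; ring_nf
  -- m * 2^(k'-k) ≤ m'
  have hstep1 : (m : ℝ) * 2 ^ (k' - k) ≤ m' := by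
    by_contra hc
    push_neg at hc
    -- m' < m * 2^(k'-k), both "integers": m' + 1 ≤ m * 2^(k'-k)
    have hint : ((m' : ℝ) + 1) ≤ (m : ℝ) * 2 ^ (k' - k) := by
      have h2 : (2:ℝ) ^ (k' - k) = ((2 ^ (k' - k).toNat : ℤ) : ℝ) := by
        push_cast
        rw [← zpow_natCast]
        congr 1
        omega
      rw [h2] at hc ⊢
      have : (m' : ℝ) < ((m * 2 ^ (k' - k).toNat : ℤ) : ℝ) := by push_cast at hc ⊢; linarith
      have := Int.lt_iff_add_one_le.mp (by exact_mod_cast this)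
      push_cast
      exact_mod_cast this
    -- then t < (m'+1) 2^{-k'} ≤ m 2^{k'-k} 2^{-k'} = m 2^{-k} ≤ t
    have : t < (m : ℝ) * 2 ^ (-k) := by
      calc t < ((m' : ℝ) + 1) * 2 ^ (-k') := h2'
        _ ≤ (m : ℝ) * 2 ^ (k' - k) * 2 ^ (-k') := by
            exact mul_le_mul_of_nonneg_right hint (h2pos _).le
        _ = (m : ℝ) * 2 ^ (-k) := by rw [key]; ring
    linarith
  have hstep2 : ((m' : ℝ) + 1) ≤ ((m : ℝ) + 1) * 2 ^ (k' - k) := by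
    by_contra hc
    push_neg at hc
    have hint : ((m : ℝ) + 1) * 2 ^ (k' - k) ≤ (m' : ℝ) := by
      have h2 : (2:ℝ) ^ (k' - k) = ((2 ^ (k' - k).toNat : ℤ) : ℝ) := by
        push_cast
        rw [← zpow_natCast]
        congr 1
        omega
      rw [h2] at hc ⊢
      have : (((m + 1) * 2 ^ (k' - k).toNat : ℤ) : ℝ) < (m' : ℝ) + 1 := by push_cast at hc ⊢; linarith
      have h3 : ((m + 1) * 2 ^ (k' - k).toNat : ℤ) < m' + 1 := by exact_mod_cast this
      have h4 : ((m + 1) * 2 ^ (k' - k).toNat : ℤ) ≤ m' := by omega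
      push_cast
      exact_mod_cast h4
    have : t < t := by
      calc t < ((m : ℝ) + 1) * 2 ^ (-k) := h2
        _ = ((m : ℝ) + 1) * 2 ^ (k' - k) * 2 ^ (-k') := by rw [key]; ring
        _ ≤ (m' : ℝ) * 2 ^ (-k') := mul_le_mul_of_nonneg_right hint (h2pos _).le
        _ ≤ t := h1'
    linarith
  constructor
  · calc (m : ℝ) * 2 ^ (-k) = (m : ℝ) * 2 ^ (k' - k) * 2 ^ (-k') := by rw [key]; ring
      _ ≤ (m' : ℝ) * 2 ^ (-k') := mul_le_mul_of_nonneg_right hstep1 (h2pos _).le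
  · calc ((m' : ℝ) + 1) * 2 ^ (-k') ≤ ((m : ℝ) + 1) * 2 ^ (k' - k) * 2 ^ (-k') :=
        mul_le_mul_of_nonneg_right hstep2 (h2pos _).le
      _ = ((m : ℝ) + 1) * 2 ^ (-k) := by rw [key]; ring

/-- Nesting: if a coarser cube `P` and finer cube `Q` share a point, `Q ⊆ P`. -/
lemma nest {n : ℕ} {P Q : DyadicCube n} (hk : P.k ≤ Q.k) {x : Fin n → ℝ}
    (hxP : x ∈ P.toSet) (hxQ : x ∈ Q.toSet) : Q.toSet ⊆ P.toSet := by
  intro s hs i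
  have h := int_facts hk (hxP i).1 (hxP i).2 (hxQ i).1 (hxQ i).2
  exact ⟨le_trans h.1 (hs i).1, lt_of_lt_of_le (hs i).2 h.2⟩

/-- Same generation cubes sharing a point are equal. -/
lemma same_gen {n : ℕ} {P Q : DyadicCube n} (hk : P.k = Q.k) {x : Fin n → ℝ}
    (hxP : x ∈ P.toSet) (hxQ : x ∈ Q.toSet) : P = Q := by
  have hm : P.m = Q.m := by
    funext i
    have h := int_facts hk.le (hxP i).1 (hxP i).2 (hxQ i).1 (hxQ i).2
    rw [← hk] at h
    have h2pos : (0:ℝ) < 2 ^ (-P.k) := zpow_pos (by norm_num) _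
    have e1 : (P.m i : ℝ) ≤ Q.m i := by
      have := h.1; nlinarith
    have e2 : (Q.m i : ℝ) ≤ P.m i := by
      have := h.2; nlinarith
    have : (P.m i : ℝ) = Q.m i := le_antisymm e1 e2
    exact_mod_cast this
  cases P; cases Q; simp_all

lemma toSet_nonempty {n : ℕ} (Q : DyadicCube n) : Q.toSet.Nonempty := by
  refine ⟨fun i => (Q.m i : ℝ) * 2 ^ (-Q.k), fun i => ⟨le_refl _, ?_⟩⟩
  show (Q.m i : ℝ) * 2 ^ (-Q.k) < ((Q.m i : ℝ) + 1) * 2 ^ (-Q.k)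
  have h2pos : (0:ℝ) < 2 ^ (-Q.k) := zpow_pos (by norm_num) _
  nlinarith

lemma toSet_measurable {n : ℕ} (Q : DyadicCube n) : MeasurableSet Q.toSet := by
  have : Q.toSet = Set.pi Set.univ (fun i =>
      Set.Ico ((Q.m i : ℝ) * 2 ^ (-Q.k)) (((Q.m i : ℝ) + 1) * 2 ^ (-Q.k))) := by
    ext x; simp [DyadicCube.toSet, Set.mem_pi, Set.mem_Ico]
  rw [this]
  exact MeasurableSet.univ_pi (fun i => measurableSet_Ico)

lemma measure_toSet_ne_top {n : ℕ} (σ : Measure (Fin n → ℝ)) [IsLocallyFiniteMeasure σ]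
    (Q : DyadicCube n) : σ Q.toSet ≠ ⊤ := by
  have hsub : Q.toSet ⊆ Set.Icc (fun i => (Q.m i : ℝ) * 2 ^ (-Q.k))
      (fun i => ((Q.m i : ℝ) + 1) * 2 ^ (-Q.k)) := by
    intro x hx
    exact ⟨fun i => (hx i).1, fun i => (hx i).2.le⟩
  exact ne_top_of_le_ne_top (IsCompact.measure_ne_top isCompact_Icc) (measure_mono hsub)

end A1A3

namespace A1A3
open scoped Classical

variable {n : ℕ}

/-- `R` is below `Q` in the dyadic order. -/
def pord (R Q : DyadicCube n) : Prop := R.toSet ⊆ Q.toSet ∧ Q.k ≤ R.k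

lemma pord_refl (R : DyadicCube n) : pord R R := ⟨subset_rfl, le_rfl⟩

lemma pord_trans {R Q P : DyadicCube n} (h1 : pord R Q) (h2 : pord Q P) : pord R P :=
  ⟨h1.1.trans h2.1, h2.2.trans h1.2⟩

/-- Two cubes above a common cube are comparable: the one with bigger k is below. -/
lemma pord_of_above {R P Q : DyadicCube n} (hP : pord R P) (hQ : pord R Q)
    (hk : P.k ≤ Q.k) : pord Q P := by
  obtain ⟨x, hx⟩ := toSet_nonempty R
  exact ⟨nest hk (hP.1 hx) (hQ.1 hx), hk⟩

lemma pord_antisymm {R Q : DyadicCube n} (h1 : pord R Q) (h2 : pord Q R) : R = Q := by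
  obtain ⟨x, hx⟩ := toSet_nonempty R
  exact same_gen (le_antisymm h2.2 h1.2) hx (h1.1 hx)

noncomputable def Lam (lam : DyadicCube n → ℝ≥0∞) (R : DyadicCube n) : ℝ≥0∞ :=
  ∑' Q, if pord R Q then lam Q else 0

noncomputable def Lam' (lam : DyadicCube n → ℝ≥0∞) (R : DyadicCube n) : ℝ≥0∞ :=
  ∑' Q, if Q = R then 0 else if pord R Q then lam Q else 0

lemma lam_le_Lam (lam : DyadicCube n → ℝ≥0∞) (R : DyadicCube n) : lam R ≤ Lam lam R := by
  have := ENNReal.le_tsum (f := fun Q => if pord R Q then lam Q else 0) R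
  simpa [Lam, pord_refl] using this

lemma Lam_eq_add (lam : DyadicCube n → ℝ≥0∞) (R : DyadicCube n) :
    Lam lam R = lam R + Lam' lam R := by
  rw [Lam, ENNReal.tsum_eq_add_tsum_ite R, if_pos (pord_refl R)]
  rfl

lemma Lam_mono_supp {lam : DyadicCube n → ℝ≥0∞} {R Q : DyadicCube n} (h : pord R Q) :
    Lam lam Q ≤ Lam lam R := by
  refine ENNReal.tsum_le_tsum fun P => ?_
  by_cases hp : pord Q P
  · rw [if_pos hp, if_pos (pord_trans h hp)]
  · rw [if_neg hp]; exact zero_le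

lemma Lam_le_tot (lam : DyadicCube n → ℝ≥0∞) (R : DyadicCube n) :
    Lam lam R ≤ ∑' Q, lam Q := by
  refine ENNReal.tsum_le_tsum fun P => ?_
  split <;> simp

lemma tot_ne_top {lam : DyadicCube n → ℝ≥0∞} (hsupp : (Function.support lam).Finite)
    (hne : ∀ Q, lam Q ≠ ⊤) : (∑' Q, lam Q) ≠ ⊤ := by
  rw [tsum_eq_sum (s := hsupp.toFinset) (fun Q hQ => by
    by_contra h; exact hQ (hsupp.mem_toFinset.mpr h))]
  exact (ENNReal.sum_lt_top.mpr (fun Q _ => lt_top_iff_ne_top.mpr (hne Q))).ne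

lemma Lam_ne_top {lam : DyadicCube n → ℝ≥0∞} (hsupp : (Function.support lam).Finite)
    (hne : ∀ Q, lam Q ≠ ⊤) (R : DyadicCube n) : Lam lam R ≠ ⊤ :=
  ne_top_of_le_ne_top (tot_ne_top hsupp hne) (Lam_le_tot lam R)

lemma Lam'_le_Lam (lam : DyadicCube n → ℝ≥0∞) (R : DyadicCube n) :
    Lam' lam R ≤ Lam lam R := by
  rw [Lam_eq_add]; exact le_add_self

/-- Abstract telescoping lemma over an `ord`-injective finite set. -/
lemma tele {ι : Type*} {r : ℝ} (hr0 : 0 < r) (w : ι → ℝ≥0∞) (ord : ι → ℤ)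
    (T : Finset ι) :
    (∀ i ∈ T, ∀ j ∈ T, ord i = ord j → i = j) →
    ∑ i ∈ T, ((∑ j ∈ T.filter (fun j => ord j ≤ ord i), w j) ^ r
        - (∑ j ∈ T.filter (fun j => ord j < ord i), w j) ^ r)
      = (∑ i ∈ T, w i) ^ r := by
  induction T using Finset.strongInduction with
  | _ T ih =>
    intro hinj
    rcases T.eq_empty_or_nonempty with rfl | hT
    · simp [ENNReal.zero_rpow_of_pos hr0]
    obtain ⟨b, hbT, hmax⟩ := T.exists_max_image ord hT
    set T' := T.erase b with hT'
    have hss : T' ⊂ T := Finset.erase_ssubset hbT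
    have hinj' : ∀ i ∈ T', ∀ j ∈ T', ord i = ord j → i = j := fun i hi j hj =>
      hinj i (Finset.mem_of_mem_erase hi) j (Finset.mem_of_mem_erase hj)
    have hfilter_le : ∀ i ∈ T', T.filter (fun j => ord j ≤ ord i)
        = T'.filter (fun j => ord j ≤ ord i) := by
      intro i hi
      apply Finset.ext
      intro j
      simp only [Finset.mem_filter, hT', Finset.mem_erase]
      constructor
      · rintro ⟨hjT, hle⟩
        refine ⟨⟨?_, hjT⟩, hle⟩
        rintro rfl
        have hij : ord i = ord j := le_antisymm (hmax i (Finset.mem_of_mem_erase hi)) hle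
        exact (Finset.mem_erase.mp hi).1 (hinj i (Finset.mem_of_mem_erase hi) j hjT hij)
      · rintro ⟨⟨_, hjT⟩, hle⟩; exact ⟨hjT, hle⟩
    have hfilter_lt : ∀ i ∈ T', T.filter (fun j => ord j < ord i)
        = T'.filter (fun j => ord j < ord i) := by
      intro i hi
      apply Finset.ext
      intro j
      simp only [Finset.mem_filter, hT', Finset.mem_erase]
      constructor
      · rintro ⟨hjT, hlt⟩
        refine ⟨⟨?_, hjT⟩, hlt⟩
        rintro rfl
        exact absurd (hmax i (Finset.mem_of_mem_erase hi)) (not_le.mpr hlt)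
      · rintro ⟨⟨_, hjT⟩, hlt⟩; exact ⟨hjT, hlt⟩
    have hb_le : T.filter (fun j => ord j ≤ ord b) = T := by
      apply Finset.filter_true_of_mem
      intro j hj; exact hmax j hj
    have hb_lt : T.filter (fun j => ord j < ord b) = T' := by
      apply Finset.ext
      intro j
      simp only [Finset.mem_filter, hT', Finset.mem_erase]
      constructor
      · rintro ⟨hjT, hlt⟩
        exact ⟨fun h => absurd hlt (by rw [h]; exact lt_irrefl _), hjT⟩
      · rintro ⟨hne, hjT⟩
        refine ⟨hjT, lt_of_le_of_ne (hmax j hjT) ?_⟩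
        intro h; exact hne (hinj j hjT b hbT h)
    rw [← Finset.add_sum_erase T _ hbT, hb_le, hb_lt]
    have hsum' : ∑ i ∈ T', ((∑ j ∈ T.filter (fun j => ord j ≤ ord i), w j) ^ r
        - (∑ j ∈ T.filter (fun j => ord j < ord i), w j) ^ r)
        = (∑ i ∈ T', w i) ^ r := by
      rw [Finset.sum_congr rfl (fun i hi => by rw [hfilter_le i hi, hfilter_lt i hi])]
      exact ih T' hss hinj'
    rw [hsum']
    have hle : (∑ i ∈ T', w i) ^ r ≤ (∑ i ∈ T, w i) ^ r :=
      ENNReal.rpow_le_rpow (Finset.sum_le_sum_of_subset hss.subset) hr0.le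
    exact tsub_add_cancel_of_le hle

end A1A3

namespace A1A3

/-- Hölder for `tsum` in `ℝ≥0∞`. -/
lemma holder_tsum {ι : Type*} [Countable ι] {θ : ℝ} (hθ0 : 0 < θ) (hθ1 : θ < 1)
    (a b : ι → ℝ≥0∞) :
    ∑' i, (a i) ^ θ * (b i) ^ (1 - θ) ≤ (∑' i, a i) ^ θ * (∑' i, b i) ^ (1 - θ) := by
  letI : MeasurableSpace ι := ⊤
  haveI : MeasurableSingletonClass ι := ⟨fun _ => trivial⟩
  have hconj : (1/θ).HolderConjugate (1/(1-θ)) := by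
    rw [Real.holderConjugate_iff]
    constructor
    · rw [lt_div_iff₀ hθ0, one_mul]; exact hθ1
    · simp only [one_div, inv_inv]; ring
  have hmeasa : Measurable (fun i : ι => a i ^ θ) := fun s _ => trivial
  have hmeasb : Measurable (fun i : ι => b i ^ (1 - θ)) := fun s _ => trivial
  have H := ENNReal.lintegral_mul_le_Lp_mul_Lq (Measure.count : Measure ι) hconj
    hmeasa.aemeasurable hmeasb.aemeasurable
  rw [MeasureTheory.lintegral_count, MeasureTheory.lintegral_count,
    MeasureTheory.lintegral_count] at H
  have e1 : ∀ i, (a i ^ θ) ^ (1/θ) = a i := fun i => by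
    rw [← ENNReal.rpow_mul, mul_one_div, div_self hθ0.ne', ENNReal.rpow_one]
  have e2 : ∀ i, (b i ^ (1-θ)) ^ (1/(1-θ)) = b i := fun i => by
    rw [← ENNReal.rpow_mul, mul_one_div, div_self (by linarith : 1 - θ ≠ 0), ENNReal.rpow_one]
  simp only [Pi.mul_apply, e1, e2, one_div_one_div] at H
  exact H

lemma real_lower {r : ℝ} (hr0 : 0 < r) (hr1 : r < 1) {A B : ℝ} (hB : 0 ≤ B) (hBA : B ≤ A) :
    r * ((A - B) * A ^ (r - 1)) ≤ A ^ r - B ^ r := by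
  rcases eq_or_lt_of_le (hB.trans hBA) with hA0 | hA0
  · have hA : A = 0 := hA0.symm
    have hB0 : B = 0 := le_antisymm (hA ▸ hBA) hB
    simp [hA, hB0, Real.zero_rpow hr0.ne', Real.zero_rpow (by linarith : r - 1 ≠ 0)]
  · have hgm : B ^ r * A ^ (1 - r) ≤ r * B + (1 - r) * A := by
      have := Real.geom_mean_le_arith_mean2_weighted (w₁ := r) (w₂ := 1 - r) (p₁ := B)
        (p₂ := A) hr0.le (by linarith) hB (hB.trans hBA) (by ring)
      linarith [this]
    have h1 : r * (A - B) ≤ A - B ^ r * A ^ (1 - r) := by nlinarith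
    have h2 : r * ((A - B) * A ^ (r - 1)) = (r * (A - B)) * A ^ (r - 1) := by ring
    rw [h2]
    have h3 : (r * (A - B)) * A ^ (r - 1) ≤ (A - B ^ r * A ^ (1 - r)) * A ^ (r - 1) :=
      mul_le_mul_of_nonneg_right h1 (Real.rpow_nonneg hA0.le _)
    refine h3.trans_eq ?_
    have hA1 : A * A ^ (r - 1) = A ^ r := by
      nth_rewrite 1 [← Real.rpow_one A]
      rw [← Real.rpow_add hA0]; ring_nf
    have hA2 : A ^ (1 - r) * A ^ (r - 1) = 1 := by
      rw [← Real.rpow_add hA0]; norm_num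
    calc (A - B ^ r * A ^ (1 - r)) * A ^ (r - 1)
        = A * A ^ (r - 1) - B ^ r * (A ^ (1 - r) * A ^ (r - 1)) := by ring
      _ = A ^ r - B ^ r := by rw [hA1, hA2, mul_one]

lemma real_upper {r : ℝ} (hr0 : 0 < r) (hr1 : r < 1) {A B : ℝ} (hB : 0 ≤ B) (hBA : B ≤ A) :
    A ^ r - B ^ r ≤ 2 * ((A - B) * A ^ (r - 1)) := by
  rcases eq_or_lt_of_le (hB.trans hBA) with hA0 | hA0
  · have hA : A = 0 := hA0.symm
    have hB0 : B = 0 := le_antisymm (hA ▸ hBA) hB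
    simp [hA, hB0, Real.zero_rpow hr0.ne', Real.zero_rpow (by linarith : r - 1 ≠ 0)]
  · -- key : B^r * A^(1-r) ≥ 2B - A
    have hkey : 2 * B - A ≤ B ^ r * A ^ (1 - r) := by
      rcases le_or_gt (2 * B) A with h | h
      · have : (0:ℝ) ≤ B ^ r * A ^ (1 - r) :=
          mul_nonneg (Real.rpow_nonneg hB _) (Real.rpow_nonneg hA0.le _)
        linarith
      · have hBpos : 0 < B := by linarith
        have hmono : B ^ (1 - r) ≤ A ^ (1 - r) :=
          Real.rpow_le_rpow hB hBA (by linarith)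
        have : B ≤ B ^ r * A ^ (1 - r) := by
          calc B = B ^ r * B ^ (1 - r) := by
                rw [← Real.rpow_add hBpos]; norm_num
            _ ≤ B ^ r * A ^ (1 - r) := mul_le_mul_of_nonneg_left hmono (Real.rpow_nonneg hB _)
        linarith
    have h1 : A - B ^ r * A ^ (1 - r) ≤ 2 * (A - B) := by linarith
    have hA1 : A * A ^ (r - 1) = A ^ r := by
      nth_rewrite 1 [← Real.rpow_one A]
      rw [← Real.rpow_add hA0]; ring_nf
    have hA2 : A ^ (1 - r) * A ^ (r - 1) = 1 := by
      rw [← Real.rpow_add hA0]; norm_num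
    have h3 : (A - B ^ r * A ^ (1 - r)) * A ^ (r - 1) ≤ (2 * (A - B)) * A ^ (r - 1) :=
      mul_le_mul_of_nonneg_right h1 (Real.rpow_nonneg hA0.le _)
    have h4 : (A - B ^ r * A ^ (1 - r)) * A ^ (r - 1) = A ^ r - B ^ r := by
      calc (A - B ^ r * A ^ (1 - r)) * A ^ (r - 1)
          = A * A ^ (r - 1) - B ^ r * (A ^ (1 - r) * A ^ (r - 1)) := by ring
        _ = A ^ r - B ^ r := by rw [hA1, hA2, mul_one]
    calc A ^ r - B ^ r = (A - B ^ r * A ^ (1 - r)) * A ^ (r - 1) := h4.symm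
      _ ≤ (2 * (A - B)) * A ^ (r - 1) := h3
      _ = 2 * ((A - B) * A ^ (r - 1)) := by ring

lemma ennreal_lower {r : ℝ} (hr0 : 0 < r) (hr1 : r < 1) {l L : ℝ≥0∞}
    (hl : l ≠ ⊤) (hL : L ≠ ⊤) :
    ENNReal.ofReal r * (l * (L + l) ^ (r - 1)) ≤ (L + l) ^ r - L ^ r := by
  set a := L + l with ha
  have hane : a ≠ ⊤ := by simp [ha, hl, hL, ENNReal.add_ne_top]
  rcases eq_or_ne a 0 with ha0 | ha0
  · have hl0 : l = 0 := by
      rw [ha] at ha0; exact (add_eq_zero.mp ha0).2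
    simp [hl0]
  · -- finite positive a
    have hart : a ^ (r - 1) ≠ ⊤ := by
      rw [ne_eq, ENNReal.rpow_eq_top_iff]
      push_neg
      exact ⟨fun h => absurd h ha0, fun h => absurd h hane⟩
    have hLa : L ≤ a := by rw [ha]; exact le_self_add
    have hlhs_ne : ENNReal.ofReal r * (l * a ^ (r - 1)) ≠ ⊤ :=
      ENNReal.mul_ne_top ENNReal.ofReal_ne_top (ENNReal.mul_ne_top hl hart)
    have hrhs_ne : a ^ r - L ^ r ≠ ⊤ :=
      ne_top_of_le_ne_top (ENNReal.rpow_ne_top_of_nonneg hr0.le hane) tsub_le_self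
    rw [← ENNReal.toReal_le_toReal hlhs_ne hrhs_ne]
    have hLr_le : L ^ r ≤ a ^ r := ENNReal.rpow_le_rpow hLa hr0.le
    rw [ENNReal.toReal_mul, ENNReal.toReal_mul, ENNReal.toReal_ofReal hr0.le,
      ENNReal.toReal_sub_of_le hLr_le (ENNReal.rpow_ne_top_of_nonneg hr0.le hane),
      ← ENNReal.toReal_rpow, ← ENNReal.toReal_rpow, ← ENNReal.toReal_rpow]
    have hlval : l.toReal = a.toReal - L.toReal := by
      rw [ha, ENNReal.toReal_add hL hl]; ring
    rw [hlval]
    exact real_lower hr0 hr1 ENNReal.toReal_nonneg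
      (ENNReal.toReal_le_toReal hL hane |>.mpr hLa)

lemma ennreal_upper {r : ℝ} (hr0 : 0 < r) (hr1 : r < 1) {l L : ℝ≥0∞}
    (hl : l ≠ ⊤) (hL : L ≠ ⊤) :
    (L + l) ^ r - L ^ r ≤ 2 * (l * (L + l) ^ (r - 1)) := by
  set a := L + l with ha
  have hane : a ≠ ⊤ := by simp [ha, hl, hL, ENNReal.add_ne_top]
  rcases eq_or_ne a 0 with ha0 | ha0
  · rw [ha0, ENNReal.zero_rpow_of_pos hr0]
    simp
  · have hart : a ^ (r - 1) ≠ ⊤ := by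
      rw [ne_eq, ENNReal.rpow_eq_top_iff]
      push_neg
      exact ⟨fun h => absurd h ha0, fun h => absurd h hane⟩
    have hLa : L ≤ a := by rw [ha]; exact le_self_add
    have hlhs_ne : a ^ r - L ^ r ≠ ⊤ :=
      ne_top_of_le_ne_top (ENNReal.rpow_ne_top_of_nonneg hr0.le hane) tsub_le_self
    have hrhs_ne : (2:ℝ≥0∞) * (l * a ^ (r - 1)) ≠ ⊤ := by
      refine ENNReal.mul_ne_top (by norm_num) (ENNReal.mul_ne_top hl hart)
    rw [← ENNReal.toReal_le_toReal hlhs_ne hrhs_ne]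
    have hLr_le : L ^ r ≤ a ^ r := ENNReal.rpow_le_rpow hLa hr0.le
    rw [ENNReal.toReal_mul, ENNReal.toReal_mul,
      ENNReal.toReal_sub_of_le hLr_le (ENNReal.rpow_ne_top_of_nonneg hr0.le hane),
      ← ENNReal.toReal_rpow, ← ENNReal.toReal_rpow, ← ENNReal.toReal_rpow]
    have hlval : l.toReal = a.toReal - L.toReal := by
      rw [ha, ENNReal.toReal_add hL hl]; ring
    rw [hlval]
    have h2 : (2:ℝ≥0∞).toReal = 2 := by simp
    rw [h2]
    exact real_upper hr0 hr1 ENNReal.toReal_nonneg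
      (ENNReal.toReal_le_toReal hL hane |>.mpr hLa)

end A1A3

namespace A1A3
open scoped Classical

variable {n : ℕ}

/-- The set where `R` is the finest cube with `lam ≠ 0` containing the point. -/
noncomputable def Esel (lam : DyadicCube n → ℝ≥0∞) (R : DyadicCube n) : Set (Fin n → ℝ) :=
  if lam R ≠ 0 then
    R.toSet \ ⋃ (Q : DyadicCube n) (_ : lam Q ≠ 0 ∧ R.k < Q.k), Q.toSet
  else ∅

lemma mem_Esel {lam : DyadicCube n → ℝ≥0∞} {R : DyadicCube n} {x : Fin n → ℝ} :
    x ∈ Esel lam R ↔ lam R ≠ 0 ∧ x ∈ R.toSet ∧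
      ∀ Q, lam Q ≠ 0 → x ∈ Q.toSet → Q.k ≤ R.k := by
  unfold Esel
  split_ifs with h
  · constructor
    · rintro ⟨hx, hn⟩
      refine ⟨h, hx, fun Q hQ hxQ => ?_⟩
      by_contra hk
      exact hn (Set.mem_iUnion.mpr ⟨Q, Set.mem_iUnion.mpr ⟨⟨hQ, not_le.mp hk⟩, hxQ⟩⟩)
    · rintro ⟨-, hx, hall⟩
      refine ⟨hx, fun hmem => ?_⟩
      obtain ⟨Q, hQ⟩ := Set.mem_iUnion.mp hmem
      obtain ⟨hc, hxQ⟩ := Set.mem_iUnion.mp hQ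
      exact absurd (hall Q hc.1 hxQ) (not_le.mpr hc.2)
  · simp only [Set.mem_empty_iff_false, false_iff]
    push_neg at h
    tauto

/-- Generic conversion between subtype tsum and ite tsum. -/
lemma tsum_cond_eq {ι : Type*} (cond : ι → Prop) (f : ι → ℝ≥0∞) :
    ∑' i : {i : ι // cond i}, f i.1 = ∑' i, if cond i then f i else 0 := by
  have h : ∑' i : {i : ι // cond i}, f i.1
      = ∑' i, Set.indicator {i : ι | cond i} f i := tsum_subtype {i : ι | cond i} f
  rw [h]
  exact tsum_congr fun i => by by_cases hc : cond i <;> simp [Set.indicator_apply, hc]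

lemma Esel_subset (lam : DyadicCube n → ℝ≥0∞) (R : DyadicCube n) :
    Esel lam R ⊆ R.toSet := fun x hx => (mem_Esel.mp hx).2.1

lemma Esel_measurable (lam : DyadicCube n → ℝ≥0∞) (R : DyadicCube n) :
    MeasurableSet (Esel lam R) := by
  unfold Esel
  split_ifs with h
  · exact (toSet_measurable R).diff
      (MeasurableSet.iUnion fun Q => MeasurableSet.iUnion fun _ => toSet_measurable Q)
  · exact MeasurableSet.empty

lemma Esel_disjoint {lam : DyadicCube n → ℝ≥0∞} {R R' : DyadicCube n} (h : R ≠ R') :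
    Disjoint (Esel lam R) (Esel lam R') := by
  rw [Set.disjoint_left]
  intro x hx hx'
  obtain ⟨hR, hxR, hall⟩ := mem_Esel.mp hx
  obtain ⟨hR', hxR', hall'⟩ := mem_Esel.mp hx'
  have h1 : R.k ≤ R'.k := hall' R hR hxR
  have h2 : R'.k ≤ R.k := hall R' hR' hxR'
  exact h (same_gen (le_antisymm h1 h2) hxR hxR')

lemma pord_of_mem_Esel {lam : DyadicCube n → ℝ≥0∞} {R Q : DyadicCube n} {x : Fin n → ℝ}
    (hx : x ∈ Esel lam R) (hQ : lam Q ≠ 0) (hxQ : x ∈ Q.toSet) : pord R Q := by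
  obtain ⟨hR, hxR, hall⟩ := mem_Esel.mp hx
  exact ⟨nest (hall Q hQ hxQ) hxQ hxR, hall Q hQ hxQ⟩

lemma exists_mem_Esel {lam : DyadicCube n → ℝ≥0∞} (hsupp : (Function.support lam).Finite)
    {x : Fin n → ℝ} {Q : DyadicCube n} (hQ : lam Q ≠ 0) (hx : x ∈ Q.toSet) :
    ∃ R, x ∈ Esel lam R := by
  set T := hsupp.toFinset.filter (fun Q' => x ∈ Q'.toSet) with hT
  have hQT : Q ∈ T := by
    rw [hT, Finset.mem_filter, Set.Finite.mem_toFinset]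
    exact ⟨hQ, hx⟩
  obtain ⟨R, hRT, hmax⟩ := T.exists_max_image (fun Q' => Q'.k) ⟨Q, hQT⟩
  rw [hT, Finset.mem_filter, Set.Finite.mem_toFinset] at hRT
  refine ⟨R, mem_Esel.mpr ⟨hRT.1, hRT.2, fun Q' hQ' hxQ' => ?_⟩⟩
  exact hmax Q' (by rw [hT, Finset.mem_filter, Set.Finite.mem_toFinset]; exact ⟨hQ', hxQ'⟩)

/-- Sum of measures of selected sets below `P` is at most `σ P`. -/
lemma sum_Esel_le {lam : DyadicCube n → ℝ≥0∞} (σ : Measure (Fin n → ℝ))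
    (cond : DyadicCube n → Prop) (P : DyadicCube n)
    (hsub : ∀ R, cond R → R.toSet ⊆ P.toSet) :
    ∑' R, (if cond R then σ (Esel lam R) else 0) ≤ σ P.toSet := by
  rw [← tsum_cond_eq cond (fun R => σ (Esel lam R))]
  have h2 : ∑' (R : {R : DyadicCube n // cond R}), σ (Esel lam R.1)
      = σ (⋃ (R : {R : DyadicCube n // cond R}), Esel lam R.1) := by
    refine (measure_iUnion ?_ (fun (R : {R : DyadicCube n // cond R}) => Esel_measurable lam R.1)).symm
    intro R R' hne
    exact Esel_disjoint (fun h => hne (Subtype.ext h))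
  rw [h2]
  refine measure_mono ?_
  refine Set.iUnion_subset fun R => ?_
  exact (Esel_subset lam R.1).trans (hsub R.1 R.2)

/-- Covering: an active cube is covered by the selected sets below it. -/
lemma le_sum_Esel {lam : DyadicCube n → ℝ≥0∞} (hsupp : (Function.support lam).Finite)
    (σ : Measure (Fin n → ℝ)) {Q : DyadicCube n} (hQ : lam Q ≠ 0) :
    σ Q.toSet ≤ ∑' R, (if pord R Q then σ (Esel lam R) else 0) := by
  rw [← tsum_cond_eq (fun R => pord R Q) (fun R => σ (Esel lam R))]
  have hcov : Q.toSet ⊆ ⋃ (R : {R : DyadicCube n // pord R Q}), Esel lam R.1 := by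
    intro x hx
    obtain ⟨R, hR⟩ := exists_mem_Esel hsupp hQ hx
    have hpord : pord R Q := pord_of_mem_Esel hR hQ hx
    exact Set.mem_iUnion.mpr ⟨⟨R, hpord⟩, hR⟩
  exact (measure_mono hcov).trans (measure_iUnion_le _)

end A1A3

namespace A1A3
open scoped Classical

variable {n : ℕ}

lemma Lam_eq_finset_sum {lam : DyadicCube n → ℝ≥0∞} (hsupp : (Function.support lam).Finite)
    (R : DyadicCube n) :
    Lam lam R = ∑ Q ∈ hsupp.toFinset.filter (fun Q => pord R Q), lam Q := by
  rw [Lam, tsum_eq_sum]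
  · exact Finset.sum_congr rfl fun Q hQ => if_pos (Finset.mem_filter.mp hQ).2
  · intro Q hQ
    by_cases hp : pord R Q
    · rw [if_pos hp]
      by_contra h0
      exact hQ (Finset.mem_filter.mpr ⟨hsupp.mem_toFinset.mpr h0, hp⟩)
    · exact if_neg hp

lemma Lam'_eq_finset_sum {lam : DyadicCube n → ℝ≥0∞} (hsupp : (Function.support lam).Finite)
    (R : DyadicCube n) :
    Lam' lam R = ∑ Q ∈ hsupp.toFinset.filter (fun Q => pord R Q ∧ Q ≠ R), lam Q := by
  rw [Lam', tsum_eq_sum]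
  · refine Finset.sum_congr rfl fun Q hQ => ?_
    obtain ⟨_, hp, hne⟩ := Finset.mem_filter.mp hQ
    rw [if_neg hne, if_pos hp]
  · intro Q hQ
    by_cases he : Q = R
    · exact if_pos he
    rw [if_neg he]
    by_cases hp : pord R Q
    · rw [if_pos hp]
      by_contra h0
      exact hQ (Finset.mem_filter.mpr ⟨hsupp.mem_toFinset.mpr h0, hp, he⟩)
    · exact if_neg hp

/-- Telescoping identity: `Λ_R^r = Σ_{Q ⊒ R} (Λ_Q^r - Λ'_Q^r)`. -/
lemma Lam_rpow_eq {r : ℝ} (hr0 : 0 < r) {lam : DyadicCube n → ℝ≥0∞}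
    (hsupp : (Function.support lam).Finite) (R : DyadicCube n) :
    (Lam lam R) ^ r
      = ∑' Q, if pord R Q then ((Lam lam Q) ^ r - (Lam' lam Q) ^ r) else 0 := by
  set S := hsupp.toFinset with hS
  set F := S.filter (fun Q => pord R Q) with hF
  have hrhs : (∑' Q, if pord R Q then ((Lam lam Q) ^ r - (Lam' lam Q) ^ r) else 0)
      = ∑ Q ∈ F, ((Lam lam Q) ^ r - (Lam' lam Q) ^ r) := by
    rw [tsum_eq_sum]
    · exact Finset.sum_congr rfl fun Q hQ => if_pos (Finset.mem_filter.mp hQ).2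
    · intro Q hQ
      by_cases hp : pord R Q
      · rw [if_pos hp]
        have h0 : lam Q = 0 := by
          by_contra h0
          exact hQ (Finset.mem_filter.mpr ⟨hsupp.mem_toFinset.mpr h0, hp⟩)
        rw [Lam_eq_add, h0, zero_add, tsub_self]
      · exact if_neg hp
  have hinj : ∀ i ∈ F, ∀ j ∈ F, i.k = j.k → i = j := by
    intro i hi j hj hk
    have hi' := (Finset.mem_filter.mp hi).2
    have hj' := (Finset.mem_filter.mp hj).2
    exact pord_antisymm (pord_of_above hj' hi' hk.ge) (pord_of_above hi' hj' hk.le)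
  have htele := tele hr0 lam (fun Q => Q.k) F hinj
  rw [hrhs, Lam_eq_finset_sum hsupp R, ← hF, ← htele]
  refine Finset.sum_congr rfl fun Q hQ => ?_
  obtain ⟨hQS, hQp⟩ := Finset.mem_filter.mp hQ
  have hle : Lam lam Q = ∑ j ∈ F.filter (fun j => j.k ≤ Q.k), lam j := by
    rw [Lam_eq_finset_sum hsupp Q]
    apply Finset.sum_congr ?_ (fun _ _ => rfl)
    ext P
    simp only [hF, Finset.mem_filter, and_assoc]
    constructor
    · rintro ⟨hPS, hp⟩
      exact ⟨hPS, pord_trans hQp hp, hp.2⟩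
    · rintro ⟨hPS, hpR, hk⟩
      exact ⟨hPS, pord_of_above hpR hQp hk⟩
  have hlt : Lam' lam Q = ∑ j ∈ F.filter (fun j => j.k < Q.k), lam j := by
    rw [Lam'_eq_finset_sum hsupp Q]
    apply Finset.sum_congr ?_ (fun _ _ => rfl)
    ext P
    simp only [hF, Finset.mem_filter, and_assoc]
    constructor
    · rintro ⟨hPS, hp, hne⟩
      refine ⟨hPS, pord_trans hQp hp, lt_of_le_of_ne hp.2 ?_⟩
      intro hk
      obtain ⟨x, hx⟩ := toSet_nonempty Q
      exact hne (same_gen hk (hp.1 hx) hx)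
    · rintro ⟨hPS, hpR, hk⟩
      refine ⟨hPS, pord_of_above hpR hQp hk.le, ?_⟩
      intro he
      rw [he] at hk
      exact lt_irrefl _ hk
  rw [hle, hlt]

end A1A3

namespace A1A3
open scoped Classical

variable {n : ℕ}

lemma tsum_ite_mul_right {ι : Type*} (p : ι → Prop) (f : ι → ℝ≥0∞) (c : ℝ≥0∞) :
    ∑' i, (if p i then f i * c else 0) = (∑' i, if p i then f i else 0) * c := by
  rw [← ENNReal.tsum_mul_right]
  exact tsum_congr fun i => by split <;> simp

lemma tsum_ite_mul_left {ι : Type*} (p : ι → Prop) (f : ι → ℝ≥0∞) (c : ℝ≥0∞) :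
    ∑' i, (if p i then c * f i else 0) = c * (∑' i, if p i then f i else 0) := by
  rw [← ENNReal.tsum_mul_left]
  exact tsum_congr fun i => by split <;> simp

lemma Esel_zero {lam : DyadicCube n → ℝ≥0∞} {R : DyadicCube n} (h : lam R = 0) :
    Esel lam R = ∅ := by
  unfold Esel
  rw [if_neg (by simp [h])]

/-- `W = Σ_R Λ_R^r σ(E_R)`. -/
noncomputable def WW (σ : Measure (Fin n → ℝ)) (r : ℝ) (lam : DyadicCube n → ℝ≥0∞) : ℝ≥0∞ :=
  ∑' R, (Lam lam R) ^ r * σ (Esel lam R)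

/-- `E = Σ_Q λ_Q Λ_Q^{r-1} σ(Q)`. -/
noncomputable def EE (σ : Measure (Fin n → ℝ)) (r : ℝ) (lam : DyadicCube n → ℝ≥0∞) : ℝ≥0∞ :=
  ∑' Q, lam Q * (Lam lam Q) ^ (r - 1) * σ Q.toSet

lemma W_ne_top {r : ℝ} (hr0 : 0 ≤ r) {lam : DyadicCube n → ℝ≥0∞}
    (hsupp : (Function.support lam).Finite) (hlamne : ∀ Q, lam Q ≠ ⊤)
    (σ : Measure (Fin n → ℝ)) [IsLocallyFiniteMeasure σ] : WW σ r lam ≠ ⊤ := by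
  have heq : WW σ r lam = ∑ R ∈ hsupp.toFinset, (Lam lam R) ^ r * σ (Esel lam R) := by
    refine tsum_eq_sum fun R hR => ?_
    have h0 : lam R = 0 := by
      by_contra h
      exact hR (hsupp.mem_toFinset.mpr h)
    rw [Esel_zero h0, measure_empty, mul_zero]
  rw [heq]
  refine (ENNReal.sum_lt_top.mpr fun R _ => ?_).ne
  refine ENNReal.mul_lt_top ?_ ?_
  · exact (ENNReal.rpow_ne_top_of_nonneg hr0 (Lam_ne_top hsupp hlamne R)).lt_top
  · exact ((measure_mono (Esel_subset lam R)).trans_lt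
      (measure_toSet_ne_top σ R).lt_top)

lemma a1_le_W {r : ℝ} (hr0 : 0 < r) {lam : DyadicCube n → ℝ≥0∞}
    (hsupp : (Function.support lam).Finite) (σ : Measure (Fin n → ℝ)) :
    ∫⁻ x, (dSum lam x) ^ r ∂σ ≤ WW σ r lam := by
  have hpt : ∀ x, (dSum lam x) ^ r
      ≤ ∑' R, Set.indicator (Esel lam R) (fun _ => (Lam lam R) ^ r) x := by
    intro x
    by_cases hx : ∃ R, x ∈ Esel lam R
    · obtain ⟨R, hR⟩ := hx
      have h1 : dSum lam x ≤ Lam lam R := by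
        refine ENNReal.tsum_le_tsum fun Q => ?_
        by_cases hxQ : x ∈ Q.toSet
        · rw [Set.indicator_of_mem hxQ]
          by_cases h0 : lam Q = 0
          · rw [h0]; exact zero_le
          · rw [if_pos (pord_of_mem_Esel hR h0 hxQ)]
        · rw [Set.indicator_of_notMem hxQ]; exact zero_le
      have h2 := ENNReal.le_tsum
        (f := fun R' => Set.indicator (Esel lam R') (fun _ => (Lam lam R') ^ r) x) R
      rw [Set.indicator_of_mem hR] at h2
      exact (ENNReal.rpow_le_rpow h1 hr0.le).trans h2
    · push_neg at hx
      have hz : dSum lam x = 0 := by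
        unfold dSum
        have hterm : ∀ Q : DyadicCube n,
            Set.indicator Q.toSet (fun _ => lam Q) x = 0 := by
          intro Q
          by_cases hxQ : x ∈ Q.toSet
          · rw [Set.indicator_of_mem hxQ]
            by_contra h0
            obtain ⟨R, hR⟩ := exists_mem_Esel hsupp h0 hxQ
            exact hx R hR
          · exact Set.indicator_of_notMem hxQ _
        rw [tsum_congr hterm, tsum_zero]
      rw [hz, ENNReal.zero_rpow_of_pos hr0]
      exact zero_le
  calc ∫⁻ x, (dSum lam x) ^ r ∂σ
      ≤ ∫⁻ x, ∑' R, Set.indicator (Esel lam R) (fun _ => (Lam lam R) ^ r) x ∂σ :=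
        lintegral_mono hpt
    _ = ∑' R, ∫⁻ x, Set.indicator (Esel lam R) (fun _ => (Lam lam R) ^ r) x ∂σ :=
        lintegral_tsum fun R => (measurable_const.indicator (Esel_measurable lam R)).aemeasurable
    _ = WW σ r lam := by
        refine tsum_congr fun R => ?_
        rw [lintegral_indicator_const (Esel_measurable lam R)]

lemma W_le_a1 {r : ℝ} (hr0 : 0 < r) {lam : DyadicCube n → ℝ≥0∞}
    (σ : Measure (Fin n → ℝ)) :
    WW σ r lam ≤ ∫⁻ x, (dSum lam x) ^ r ∂σ := by
  have hdmeas : Measurable (dSum lam) :=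
    Measurable.ennreal_tsum fun Q => measurable_const.indicator (toSet_measurable Q)
  have hmeas : Measurable (fun x => (dSum lam x) ^ r) :=
    ENNReal.continuous_rpow_const.measurable.comp hdmeas
  have step : ∀ R : DyadicCube n, (Lam lam R) ^ r * σ (Esel lam R)
      ≤ ∫⁻ x, Set.indicator (Esel lam R) (fun y => (dSum lam y) ^ r) x ∂σ := by
    intro R
    rw [← lintegral_indicator_const (Esel_measurable lam R)]
    refine lintegral_mono fun x => ?_
    by_cases hx : x ∈ Esel lam R
    · rw [Set.indicator_of_mem hx, Set.indicator_of_mem hx]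
      refine ENNReal.rpow_le_rpow ?_ hr0.le
      refine ENNReal.tsum_le_tsum fun Q => ?_
      by_cases hp : pord R Q
      · rw [if_pos hp, Set.indicator_of_mem (hp.1 ((Esel_subset lam R) hx))]
      · rw [if_neg hp]; exact zero_le
    · rw [Set.indicator_of_notMem hx, Set.indicator_of_notMem hx]
  calc WW σ r lam
      ≤ ∑' R, ∫⁻ x, Set.indicator (Esel lam R) (fun y => (dSum lam y) ^ r) x ∂σ :=
        ENNReal.tsum_le_tsum step
    _ = ∫⁻ x, ∑' R, Set.indicator (Esel lam R) (fun y => (dSum lam y) ^ r) x ∂σ :=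
        (lintegral_tsum fun R => (hmeas.indicator (Esel_measurable lam R)).aemeasurable).symm
    _ ≤ ∫⁻ x, (dSum lam x) ^ r ∂σ := by
        refine lintegral_mono fun x => ?_
        by_cases hx : ∃ R, x ∈ Esel lam R
        · obtain ⟨R0, hR0⟩ := hx
          rw [tsum_eq_single R0 ?_]
          · rw [Set.indicator_of_mem hR0]
          · intro R hne
            refine Set.indicator_of_notMem (fun hmem => ?_) _
            exact (Set.disjoint_left.mp (Esel_disjoint hne)) hmem hR0
        · push_neg at hx
          have : ∀ R : DyadicCube n,
              Set.indicator (Esel lam R) (fun y => (dSum lam y) ^ r) x = 0 :=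
            fun R => Set.indicator_of_notMem (hx R) _
          rw [tsum_congr this, tsum_zero]
          exact zero_le

end A1A3

namespace A1A3
open scoped Classical

variable {n : ℕ}

lemma chain_bound {r : ℝ} (hr0 : 0 < r) (hr1 : r < 1) {lam : DyadicCube n → ℝ≥0∞}
    (hsupp : (Function.support lam).Finite) (hlamne : ∀ Q, lam Q ≠ ⊤) (R : DyadicCube n) :
    ∑' Q, (if pord R Q then lam Q * (Lam lam Q) ^ (r - 1) else 0)
      ≤ (ENNReal.ofReal r)⁻¹ * (Lam lam R) ^ r := by
  rw [Lam_rpow_eq hr0 hsupp R, ← ENNReal.tsum_mul_left]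
  refine ENNReal.tsum_le_tsum fun Q => ?_
  by_cases hp : pord R Q
  · rw [if_pos hp, if_pos hp]
    have hL' : Lam' lam Q ≠ ⊤ :=
      ne_top_of_le_ne_top (Lam_ne_top hsupp hlamne Q) (Lam'_le_Lam lam Q)
    have hkey := ennreal_lower hr0 hr1 (hlamne Q) hL'
    have hadd : Lam' lam Q + lam Q = Lam lam Q := by rw [Lam_eq_add]; ring
    rw [hadd] at hkey
    have hr0' : ENNReal.ofReal r ≠ 0 := (ENNReal.ofReal_pos.mpr hr0).ne'
    calc lam Q * Lam lam Q ^ (r - 1)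
        = (ENNReal.ofReal r)⁻¹ * (ENNReal.ofReal r * (lam Q * Lam lam Q ^ (r - 1))) := by
          rw [← mul_assoc, ENNReal.inv_mul_cancel hr0' ENNReal.ofReal_ne_top, one_mul]
      _ ≤ (ENNReal.ofReal r)⁻¹ * (Lam lam Q ^ r - Lam' lam Q ^ r) := mul_le_mul_right hkey _
  · simp [hp]

lemma E_le_W {r : ℝ} (hr0 : 0 < r) (hr1 : r < 1) {lam : DyadicCube n → ℝ≥0∞}
    (hsupp : (Function.support lam).Finite) (hlamne : ∀ Q, lam Q ≠ ⊤)
    (σ : Measure (Fin n → ℝ)) :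
    EE σ r lam ≤ (ENNReal.ofReal r)⁻¹ * WW σ r lam := by
  have step1 : ∀ Q : DyadicCube n, lam Q * (Lam lam Q) ^ (r - 1) * σ Q.toSet
      ≤ ∑' R, if pord R Q then (lam Q * (Lam lam Q) ^ (r - 1)) * σ (Esel lam R) else 0 := by
    intro Q
    by_cases h0 : lam Q = 0
    · simp [h0]
    · have hcov := le_sum_Esel hsupp σ h0
      calc lam Q * Lam lam Q ^ (r - 1) * σ Q.toSet
          ≤ lam Q * Lam lam Q ^ (r - 1) * ∑' R, (if pord R Q then σ (Esel lam R) else 0) :=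
            mul_le_mul_right hcov _
        _ = _ := by
            rw [← ENNReal.tsum_mul_left]
            exact tsum_congr fun R => by split <;> simp
  calc EE σ r lam
      ≤ ∑' Q, ∑' R, (if pord R Q then (lam Q * (Lam lam Q) ^ (r - 1)) * σ (Esel lam R) else 0) :=
        ENNReal.tsum_le_tsum step1
    _ = ∑' R, ∑' Q, (if pord R Q then (lam Q * (Lam lam Q) ^ (r - 1)) * σ (Esel lam R) else 0) :=
        ENNReal.tsum_comm
    _ ≤ ∑' R, ((ENNReal.ofReal r)⁻¹ * (Lam lam R) ^ r) * σ (Esel lam R) := by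
        refine ENNReal.tsum_le_tsum fun R => ?_
        rw [tsum_ite_mul_right]
        exact mul_le_mul_left (chain_bound hr0 hr1 hsupp hlamne R) _
    _ = (ENNReal.ofReal r)⁻¹ * WW σ r lam := by
        rw [WW, ← ENNReal.tsum_mul_left]
        exact tsum_congr fun R => by rw [mul_assoc]

end A1A3

namespace A1A3
open scoped Classical

variable {n : ℕ}

lemma easy_dir {r : ℝ} (hr0 : 0 < r) (hr1 : r < 1)
    (σ : Measure (Fin n → ℝ)) [IsLocallyFiniteMeasure σ]
    {lam : DyadicCube n → ℝ≥0∞} (hsupp : (Function.support lam).Finite)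
    (hlamne : ∀ Q, lam Q ≠ ⊤)
    (ν : DyadicCube n → ℝ≥0∞)
    (hν0 : ∀ Q : DyadicCube n, σ Q.toSet = 0 → ν Q = 0)
    (hνC : ∀ P : DyadicCube n, σ P.toSet ≠ 0 →
      (∑' Q : {Q : DyadicCube n // Q.toSet ⊆ P.toSet},
        (ν Q.1 / σ Q.1.toSet) ^ (1 / (1 - r)) * σ Q.1.toSet) ≤ σ P.toSet) :
    ∑' Q, (lam Q) ^ r * ν Q
      ≤ (2 * (ENNReal.ofReal r)⁻¹) * ∫⁻ x, (dSum lam x) ^ r ∂σ := by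
  have h1r : 0 < 1 - r := by linarith
  set a : DyadicCube n → ℝ≥0∞ := fun Q => lam Q * (Lam lam Q) ^ (r - 1) * σ Q.toSet with ha
  set b : DyadicCube n → ℝ≥0∞ :=
    fun Q => (ν Q / σ Q.toSet) ^ (1 / (1 - r)) * (Lam lam Q) ^ r * σ Q.toSet with hb
  have hM1 : ∀ Q, (lam Q) ^ r * ν Q ≤ (a Q) ^ r * (b Q) ^ (1 - r) := by
    intro Q
    by_cases hσ0 : σ Q.toSet = 0
    · rw [hν0 Q hσ0, mul_zero]; exact zero_le
    by_cases hΛ0 : Lam lam Q = 0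
    · have h0 : lam Q = 0 := le_zero_iff.mp (hΛ0 ▸ lam_le_Lam lam Q)
      rw [h0, ENNReal.zero_rpow_of_pos hr0, zero_mul]; exact zero_le
    have hσtop := measure_toSet_ne_top σ Q
    have hΛtop := Lam_ne_top hsupp hlamne Q
    have e : (a Q) ^ r * (b Q) ^ (1 - r) = (lam Q) ^ r * ν Q := by
      rw [ha, hb]
      simp only []
      rw [ENNReal.mul_rpow_of_nonneg _ _ hr0.le, ENNReal.mul_rpow_of_nonneg _ _ hr0.le,
        ENNReal.mul_rpow_of_nonneg _ _ h1r.le, ENNReal.mul_rpow_of_nonneg _ _ h1r.le,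
        ← ENNReal.rpow_mul (Lam lam Q) (r - 1) r,
        ← ENNReal.rpow_mul (ν Q / σ Q.toSet) (1 / (1 - r)) (1 - r),
        ← ENNReal.rpow_mul (Lam lam Q) r (1 - r)]
      have hexp1 : (1 / (1 - r)) * (1 - r) = 1 := by field_simp
      rw [hexp1, ENNReal.rpow_one]
      have hexp2 : Lam lam Q ^ ((r - 1) * r) * Lam lam Q ^ (r * (1 - r)) = 1 := by
        rw [← ENNReal.rpow_add _ _ hΛ0 hΛtop, show (r - 1) * r + r * (1 - r) = 0 by ring,
          ENNReal.rpow_zero]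
      have hexp3 : σ Q.toSet ^ r * σ Q.toSet ^ (1 - r) = σ Q.toSet := by
        rw [← ENNReal.rpow_add _ _ hσ0 hσtop, show r + (1 - r) = 1 by ring, ENNReal.rpow_one]
      calc lam Q ^ r * Lam lam Q ^ ((r - 1) * r) * σ Q.toSet ^ r
            * (ν Q / σ Q.toSet * Lam lam Q ^ (r * (1 - r)) * σ Q.toSet ^ (1 - r))
          = lam Q ^ r * ((ν Q / σ Q.toSet)
              * ((Lam lam Q ^ ((r - 1) * r) * Lam lam Q ^ (r * (1 - r)))
                * (σ Q.toSet ^ r * σ Q.toSet ^ (1 - r)))) := by ring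
        _ = lam Q ^ r * (ν Q / σ Q.toSet * (1 * σ Q.toSet)) := by rw [hexp2, hexp3]
        _ = (lam Q) ^ r * ν Q := by rw [one_mul, ENNReal.div_mul_cancel hσ0 hσtop]
    exact le_of_eq e.symm
  have hbP : ∀ Q, b Q = ∑' P, if pord Q P then
      ((ν Q / σ Q.toSet) ^ (1 / (1 - r)) * σ Q.toSet)
        * ((Lam lam P) ^ r - (Lam' lam P) ^ r) else 0 := by
    intro Q
    rw [hb]
    simp only []
    rw [show (ν Q / σ Q.toSet) ^ (1 / (1 - r)) * (Lam lam Q) ^ r * σ Q.toSet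
        = ((ν Q / σ Q.toSet) ^ (1 / (1 - r)) * σ Q.toSet) * (Lam lam Q) ^ r by ring,
      Lam_rpow_eq hr0 hsupp Q, ← ENNReal.tsum_mul_left]
    exact tsum_congr fun P => by split <;> simp
  have hG : ∑' Q, b Q ≤ 2 * EE σ r lam := by
    calc ∑' Q, b Q
        = ∑' Q, ∑' P, (if pord Q P then
            ((ν Q / σ Q.toSet) ^ (1 / (1 - r)) * σ Q.toSet)
              * ((Lam lam P) ^ r - (Lam' lam P) ^ r) else 0) := tsum_congr hbP
      _ = ∑' P, ∑' Q, (if pord Q P then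
            ((ν Q / σ Q.toSet) ^ (1 / (1 - r)) * σ Q.toSet)
              * ((Lam lam P) ^ r - (Lam' lam P) ^ r) else 0) := ENNReal.tsum_comm
      _ = ∑' P, (∑' Q, if pord Q P then
            (ν Q / σ Q.toSet) ^ (1 / (1 - r)) * σ Q.toSet else 0)
              * ((Lam lam P) ^ r - (Lam' lam P) ^ r) :=
          tsum_congr fun P => tsum_ite_mul_right _ _ _
      _ ≤ ∑' P, σ P.toSet * ((Lam lam P) ^ r - (Lam' lam P) ^ r) := by
          refine ENNReal.tsum_le_tsum fun P => mul_le_mul_left ?_ _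
          by_cases hσP : σ P.toSet = 0
          · have hz : ∀ Q : DyadicCube n, (if pord Q P then
                (ν Q / σ Q.toSet) ^ (1 / (1 - r)) * σ Q.toSet else 0) = 0 := by
              intro Q
              split
              · rename_i hp
                have h0 : σ Q.toSet = 0 :=
                  le_antisymm (hσP ▸ measure_mono hp.1) (zero_le)
                rw [h0, mul_zero]
              · rfl
            rw [tsum_congr hz, tsum_zero, hσP]
          · have hwiden : ∀ Q : DyadicCube n, (if pord Q P then
                (ν Q / σ Q.toSet) ^ (1 / (1 - r)) * σ Q.toSet else 0)
                ≤ (if Q.toSet ⊆ P.toSet then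
                  (ν Q / σ Q.toSet) ^ (1 / (1 - r)) * σ Q.toSet else 0) := by
              intro Q
              by_cases hp : pord Q P
              · rw [if_pos hp, if_pos hp.1]
              · rw [if_neg hp]; exact zero_le
            refine (ENNReal.tsum_le_tsum hwiden).trans ?_
            rw [← tsum_cond_eq (fun Q : DyadicCube n => Q.toSet ⊆ P.toSet)
              (fun Q => (ν Q / σ Q.toSet) ^ (1 / (1 - r)) * σ Q.toSet)]
            exact hνC P hσP
      _ ≤ ∑' P, σ P.toSet * (2 * (lam P * (Lam lam P) ^ (r - 1))) := by
          refine ENNReal.tsum_le_tsum fun P => mul_le_mul_right ?_ _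
          have hL' : Lam' lam P ≠ ⊤ :=
            ne_top_of_le_ne_top (Lam_ne_top hsupp hlamne P) (Lam'_le_Lam lam P)
          have hupper := ennreal_upper hr0 hr1 (hlamne P) hL'
          rwa [show Lam' lam P + lam P = Lam lam P from by rw [Lam_eq_add]; ring] at hupper
      _ = 2 * EE σ r lam := by
          rw [EE, ← ENNReal.tsum_mul_left]
          exact tsum_congr fun P => by ring
  have hpair : ∑' Q, (lam Q) ^ r * ν Q
      ≤ (EE σ r lam) ^ r * (∑' Q, b Q) ^ (1 - r) := by
    refine (ENNReal.tsum_le_tsum hM1).trans ?_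
    have hh := holder_tsum hr0 hr1 a b
    exact hh
  set E := EE σ r lam with hE
  have hEW := E_le_W hr0 hr1 hsupp hlamne σ
  have hWa1 := W_le_a1 hr0 (lam := lam) σ
  have hWne := W_ne_top hr0.le hsupp hlamne σ
  have hr0' : ENNReal.ofReal r ≠ 0 := (ENNReal.ofReal_pos.mpr hr0).ne'
  have hinvne : (ENNReal.ofReal r)⁻¹ ≠ ⊤ := ENNReal.inv_ne_top.mpr hr0'
  have hEne : E ≠ ⊤ :=
    ne_top_of_le_ne_top (ENNReal.mul_ne_top hinvne hWne) hEW
  by_cases hE0 : E = 0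
  · have hb0 : ∑' Q, b Q = 0 := by
      refine le_zero_iff.mp ?_
      calc ∑' Q, b Q ≤ 2 * E := hG
        _ = 0 := by rw [hE0, mul_zero]
    calc ∑' Q, (lam Q) ^ r * ν Q ≤ E ^ r * (∑' Q, b Q) ^ (1 - r) := hpair
      _ = 0 := by rw [hE0, hb0, ENNReal.zero_rpow_of_pos hr0, zero_mul]
      _ ≤ _ := zero_le
  · have hfin : E ^ r * (2 * E) ^ (1 - r) ≤ 2 * E := by
      rw [ENNReal.mul_rpow_of_nonneg _ _ h1r.le]
      calc E ^ r * ((2:ℝ≥0∞) ^ (1 - r) * E ^ (1 - r))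
          = (2:ℝ≥0∞) ^ (1 - r) * (E ^ r * E ^ (1 - r)) := by ring
        _ = (2:ℝ≥0∞) ^ (1 - r) * E := by
            rw [← ENNReal.rpow_add _ _ hE0 hEne, show r + (1 - r) = 1 by ring,
              ENNReal.rpow_one]
        _ ≤ 2 * E := by
            refine mul_le_mul_left ?_ _
            calc (2:ℝ≥0∞) ^ (1 - r) ≤ (2:ℝ≥0∞) ^ (1:ℝ) :=
                ENNReal.rpow_le_rpow_of_exponent_le one_le_two (by linarith)
              _ = 2 := ENNReal.rpow_one 2
    calc ∑' Q, (lam Q) ^ r * ν Q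
        ≤ E ^ r * (∑' Q, b Q) ^ (1 - r) := hpair
      _ ≤ E ^ r * (2 * E) ^ (1 - r) :=
          mul_le_mul_right (ENNReal.rpow_le_rpow hG h1r.le) _
      _ ≤ 2 * E := hfin
      _ ≤ 2 * ((ENNReal.ofReal r)⁻¹ * WW σ r lam) := mul_le_mul_right hEW _
      _ ≤ 2 * ((ENNReal.ofReal r)⁻¹ * ∫⁻ x, (dSum lam x) ^ r ∂σ) :=
          mul_le_mul_right (mul_le_mul_right hWa1 _) _
      _ = (2 * (ENNReal.ofReal r)⁻¹) * ∫⁻ x, (dSum lam x) ^ r ∂σ := by rw [mul_assoc]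

end A1A3

namespace A1A3
open scoped Classical

variable {n : ℕ}

/-- The extremal Carleson sequence. -/
noncomputable def nustar (σ : Measure (Fin n → ℝ)) (r : ℝ)
    (lam : DyadicCube n → ℝ≥0∞) (Q : DyadicCube n) : ℝ≥0∞ :=
  lam Q ^ (1 - r) * ∑' R, if pord R Q then (Lam lam R) ^ (r - 1) * σ (Esel lam R) else 0

lemma nustar_null {r : ℝ} (hr1 : r < 1) (σ : Measure (Fin n → ℝ))
    {lam : DyadicCube n → ℝ≥0∞}
    (hnull : ∀ Q : DyadicCube n, σ Q.toSet = 0 → lam Q = 0) :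
    ∀ Q : DyadicCube n, σ Q.toSet = 0 → nustar σ r lam Q = 0 := by
  intro Q hσ
  rw [nustar, hnull Q hσ, ENNReal.zero_rpow_of_pos (by linarith), zero_mul]

lemma nustar_pairing {r : ℝ} (hr0 : 0 < r) (hr1 : r < 1) (σ : Measure (Fin n → ℝ))
    {lam : DyadicCube n → ℝ≥0∞} (hsupp : (Function.support lam).Finite)
    (hlamne : ∀ Q, lam Q ≠ ⊤) :
    WW σ r lam ≤ ∑' Q, (lam Q) ^ r * nustar σ r lam Q := by
  have hterm : ∀ Q, (lam Q) ^ r * nustar σ r lam Q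
      = lam Q * ∑' R, (if pord R Q then (Lam lam R) ^ (r - 1) * σ (Esel lam R) else 0) := by
    intro Q
    rw [nustar, ← mul_assoc]
    congr 1
    by_cases h0 : lam Q = 0
    · rw [h0, ENNReal.zero_rpow_of_pos hr0, zero_mul]
    · rw [← ENNReal.rpow_add _ _ h0 (hlamne Q), show r + (1 - r) = 1 by ring,
        ENNReal.rpow_one]
  have hswap : ∑' Q, lam Q
      * ∑' R, (if pord R Q then (Lam lam R) ^ (r - 1) * σ (Esel lam R) else 0)
      = ∑' R, Lam lam R * ((Lam lam R) ^ (r - 1) * σ (Esel lam R)) := by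
    calc ∑' Q, lam Q * ∑' R, (if pord R Q then (Lam lam R) ^ (r - 1) * σ (Esel lam R) else 0)
        = ∑' Q, ∑' R, (if pord R Q then lam Q * ((Lam lam R) ^ (r - 1) * σ (Esel lam R)) else 0) :=
          tsum_congr fun Q => (tsum_ite_mul_left _ _ _).symm
      _ = ∑' R, ∑' Q, (if pord R Q then lam Q * ((Lam lam R) ^ (r - 1) * σ (Esel lam R)) else 0) :=
          ENNReal.tsum_comm
      _ = ∑' R, (∑' Q, if pord R Q then lam Q else 0)
            * ((Lam lam R) ^ (r - 1) * σ (Esel lam R)) :=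
          tsum_congr fun R => tsum_ite_mul_right _ _ _
      _ = ∑' R, Lam lam R * ((Lam lam R) ^ (r - 1) * σ (Esel lam R)) := by
          exact tsum_congr fun R => by rw [Lam]
  rw [tsum_congr hterm, hswap, WW]
  refine ENNReal.tsum_le_tsum fun R => ?_
  by_cases hE0 : σ (Esel lam R) = 0
  · rw [hE0, mul_zero, mul_zero, mul_zero]
  · have h0 : lam R ≠ 0 := by
      intro h
      exact hE0 (by rw [Esel_zero h, measure_empty])
    have hΛ0 : Lam lam R ≠ 0 := fun h =>
      h0 (le_zero_iff.mp (h ▸ lam_le_Lam lam R))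
    have hΛtop := Lam_ne_top hsupp hlamne R
    rw [← mul_assoc]
    refine le_of_eq ?_
    congr 1
    calc Lam lam R ^ r = Lam lam R ^ (1 + (r - 1)) := by norm_num
      _ = Lam lam R ^ (1:ℝ) * Lam lam R ^ (r - 1) := ENNReal.rpow_add _ _ hΛ0 hΛtop
      _ = Lam lam R * Lam lam R ^ (r - 1) := by rw [ENNReal.rpow_one]

lemma nustar_carleson {r : ℝ} (hr0 : 0 < r) (hr1 : r < 1)
    (σ : Measure (Fin n → ℝ)) [IsLocallyFiniteMeasure σ]
    {lam : DyadicCube n → ℝ≥0∞} (hsupp : (Function.support lam).Finite)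
    (hlamne : ∀ Q, lam Q ≠ ⊤) :
    ∀ P : DyadicCube n,
      (∑' Q : {Q : DyadicCube n // Q.toSet ⊆ P.toSet},
        (nustar σ r lam Q.1 / σ Q.1.toSet) ^ (1 / (1 - r)) * σ Q.1.toSet) ≤ σ P.toSet := by
  intro P
  have h1r : 0 < 1 - r := by linarith
  set UU : DyadicCube n → ℝ≥0∞ :=
    fun Q => ∑' R, if pord R Q then (Lam lam R)⁻¹ * σ (Esel lam R) else 0 with hUU
  -- per-cube bound
  have hperQ : ∀ Q : DyadicCube n,
      (nustar σ r lam Q / σ Q.toSet) ^ (1 / (1 - r)) * σ Q.toSet ≤ lam Q * UU Q := by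
    intro Q
    by_cases hσ0 : σ Q.toSet = 0
    · rw [hσ0, mul_zero]; exact zero_le
    have hσtop := measure_toSet_ne_top σ Q
    -- Hölder on the inner sum
    have hK : (∑' R, if pord R Q then (Lam lam R) ^ (r - 1) * σ (Esel lam R) else 0)
        ≤ (UU Q) ^ (1 - r) * (σ Q.toSet) ^ r := by
      have hterm : ∀ R : DyadicCube n,
          (if pord R Q then (Lam lam R) ^ (r - 1) * σ (Esel lam R) else 0)
          ≤ (if pord R Q then (Lam lam R)⁻¹ * σ (Esel lam R) else 0) ^ (1 - r)
            * (if pord R Q then σ (Esel lam R) else 0) ^ r := by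
        intro R
        by_cases hp : pord R Q
        · rw [if_pos hp, if_pos hp, if_pos hp]
          by_cases hE0 : σ (Esel lam R) = 0
          · rw [hE0, mul_zero]; exact zero_le
          · have h0 : lam R ≠ 0 := by
              intro h
              exact hE0 (by rw [Esel_zero h, measure_empty])
            have hΛ0 : Lam lam R ≠ 0 := fun h =>
              h0 (le_zero_iff.mp (h ▸ lam_le_Lam lam R))
            have hΛtop := Lam_ne_top hsupp hlamne R
            have hEtop : σ (Esel lam R) ≠ ⊤ :=
              ne_top_of_le_ne_top (measure_toSet_ne_top σ R)
                (measure_mono (Esel_subset lam R))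
            refine le_of_eq ?_
            rw [ENNReal.mul_rpow_of_nonneg _ _ h1r.le, ENNReal.inv_rpow]
            calc Lam lam R ^ (r - 1) * σ (Esel lam R)
                = (Lam lam R ^ (1 - r))⁻¹ * (σ (Esel lam R) ^ (1 - r) * σ (Esel lam R) ^ r) := by
                  rw [← ENNReal.rpow_add _ _ hE0 hEtop, show (1 - r) + r = 1 by ring,
                    ENNReal.rpow_one, show r - 1 = -(1 - r) by ring, ENNReal.rpow_neg]
              _ = (Lam lam R ^ (1 - r))⁻¹ * σ (Esel lam R) ^ (1 - r) * σ (Esel lam R) ^ r := by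
                  ring
        · rw [if_neg hp, if_neg hp, if_neg hp,
            ENNReal.zero_rpow_of_pos h1r, zero_mul]
      refine (ENNReal.tsum_le_tsum hterm).trans ?_
      have hhold := holder_tsum h1r (by linarith : 1 - r < 1)
        (fun R => if pord R Q then (Lam lam R)⁻¹ * σ (Esel lam R) else 0)
        (fun R => if pord R Q then σ (Esel lam R) else 0)
      rw [show (1:ℝ) - (1 - r) = r by ring] at hhold
      refine hhold.trans ?_
      refine mul_le_mul_right (ENNReal.rpow_le_rpow ?_ hr0.le) _
      exact sum_Esel_le σ (fun R => pord R Q) Q (fun R h => h.1)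
    -- main computation
    have hstep : (nustar σ r lam Q / σ Q.toSet) ^ (1 / (1 - r)) * σ Q.toSet
        ≤ (lam Q ^ (1 - r) * ((UU Q) ^ (1 - r) * (σ Q.toSet) ^ r) * (σ Q.toSet)⁻¹)
            ^ (1 / (1 - r)) * σ Q.toSet := by
      refine mul_le_mul_left (ENNReal.rpow_le_rpow ?_ (by positivity)) _
      rw [div_eq_mul_inv, nustar]
      exact mul_le_mul_left (mul_le_mul_right hK _) _
    refine hstep.trans ?_
    have hsimp : (lam Q ^ (1 - r) * ((UU Q) ^ (1 - r) * (σ Q.toSet) ^ r) * (σ Q.toSet)⁻¹)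
        ^ (1 / (1 - r)) = lam Q * UU Q * (σ Q.toSet)⁻¹ := by
      have hexp : (1 - r) * (1 / (1 - r)) = 1 := by field_simp
      have hσr : (σ Q.toSet) ^ r * (σ Q.toSet)⁻¹ = (σ Q.toSet) ^ (r - 1) := by
        rw [← ENNReal.rpow_neg_one, ← ENNReal.rpow_add _ _ hσ0 hσtop,
          show r + -1 = r - 1 by ring]
      have hσexp : ((σ Q.toSet) ^ (r - 1)) ^ (1 / (1 - r)) = (σ Q.toSet)⁻¹ := by
        rw [← ENNReal.rpow_mul, show (r - 1) * (1 / (1 - r)) = -1 by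
            rw [mul_one_div, div_eq_iff (by linarith), neg_one_mul, neg_sub],
          ENNReal.rpow_neg_one]
      calc (lam Q ^ (1 - r) * ((UU Q) ^ (1 - r) * (σ Q.toSet) ^ r) * (σ Q.toSet)⁻¹)
          ^ (1 / (1 - r))
          = (lam Q ^ (1 - r) * (UU Q) ^ (1 - r) * ((σ Q.toSet) ^ r * (σ Q.toSet)⁻¹))
            ^ (1 / (1 - r)) := by ring_nf
        _ = (lam Q ^ (1 - r)) ^ (1 / (1 - r)) * ((UU Q) ^ (1 - r)) ^ (1 / (1 - r))
            * ((σ Q.toSet) ^ (r - 1)) ^ (1 / (1 - r)) := by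
            rw [hσr, ENNReal.mul_rpow_of_nonneg _ _ (by positivity : (0:ℝ) ≤ 1 / (1 - r)),
              ENNReal.mul_rpow_of_nonneg _ _ (by positivity : (0:ℝ) ≤ 1 / (1 - r))]
        _ = lam Q * UU Q * (σ Q.toSet)⁻¹ := by
            rw [← ENNReal.rpow_mul (lam Q), ← ENNReal.rpow_mul (UU Q), hexp,
              ENNReal.rpow_one, ENNReal.rpow_one, hσexp]
    rw [hsimp, mul_assoc, mul_assoc]
    rw [ENNReal.inv_mul_cancel hσ0 hσtop, mul_one]
  -- now sum over Q ⊆ P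
  rw [tsum_cond_eq (fun Q : DyadicCube n => Q.toSet ⊆ P.toSet)
    (fun Q => (nustar σ r lam Q / σ Q.toSet) ^ (1 / (1 - r)) * σ Q.toSet)]
  have hstep2 : ∀ Q : DyadicCube n,
      (if Q.toSet ⊆ P.toSet then (nustar σ r lam Q / σ Q.toSet) ^ (1 / (1 - r)) * σ Q.toSet else 0)
      ≤ ∑' R, (if Q.toSet ⊆ P.toSet ∧ pord R Q then
          lam Q * ((Lam lam R)⁻¹ * σ (Esel lam R)) else 0) := by
    intro Q
    by_cases hQP : Q.toSet ⊆ P.toSet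
    · rw [if_pos hQP]
      refine (hperQ Q).trans ?_
      rw [hUU]
      simp only []
      rw [← tsum_ite_mul_left (fun R => pord R Q)
        (fun R => (Lam lam R)⁻¹ * σ (Esel lam R)) (lam Q)]
      refine ENNReal.tsum_le_tsum fun R => ?_
      by_cases hp : pord R Q
      · rw [if_pos hp, if_pos ⟨hQP, hp⟩]
      · rw [if_neg hp, if_neg (fun h => hp h.2)]
    · rw [if_neg hQP]
      exact zero_le
  refine (ENNReal.tsum_le_tsum hstep2).trans ?_
  rw [ENNReal.tsum_comm]
  have hstep3 : ∀ R : DyadicCube n,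
      ∑' Q, (if Q.toSet ⊆ P.toSet ∧ pord R Q then
        lam Q * ((Lam lam R)⁻¹ * σ (Esel lam R)) else 0)
      ≤ (if R.toSet ⊆ P.toSet then σ (Esel lam R) else 0) := by
    intro R
    rw [show (fun Q => if Q.toSet ⊆ P.toSet ∧ pord R Q then
        lam Q * ((Lam lam R)⁻¹ * σ (Esel lam R)) else 0)
        = fun Q => (if Q.toSet ⊆ P.toSet ∧ pord R Q then lam Q else 0)
          * ((Lam lam R)⁻¹ * σ (Esel lam R)) from funext fun Q => by split <;> simp]
    rw [ENNReal.tsum_mul_right]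
    by_cases hRP : R.toSet ⊆ P.toSet
    · rw [if_pos hRP]
      have hinner : (∑' Q, if Q.toSet ⊆ P.toSet ∧ pord R Q then lam Q else 0) ≤ Lam lam R := by
        refine ENNReal.tsum_le_tsum fun Q => ?_
        by_cases hc : Q.toSet ⊆ P.toSet ∧ pord R Q
        · rw [if_pos hc, if_pos hc.2]
        · rw [if_neg hc]; exact zero_le
      refine (mul_le_mul_left hinner _).trans ?_
      by_cases hΛ0 : Lam lam R = 0
      · rw [hΛ0, zero_mul]; exact zero_le
      · rw [← mul_assoc, ENNReal.mul_inv_cancel hΛ0 (Lam_ne_top hsupp hlamne R), one_mul]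
    · rw [if_neg hRP]
      have hz : ∀ Q : DyadicCube n,
          (if Q.toSet ⊆ P.toSet ∧ pord R Q then lam Q else 0) = 0 := by
        intro Q
        rw [if_neg]
        rintro ⟨hQP, hp⟩
        exact hRP (hp.1.trans hQP)
      rw [tsum_congr hz, tsum_zero, zero_mul]
  refine (ENNReal.tsum_le_tsum hstep3).trans ?_
  exact sum_Esel_le σ (fun R => R.toSet ⊆ P.toSet) P (fun R h => h)

end A1A3


/-- Duality Lemma 3.1: for `0 < r < 1`,
`a₁(Λ) = ∫ (Σ_Q λ_Q χ_Q)^r dσ` is equivalent to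
`a₃(Λ) = sup { Σ_R λ_R^r ν_R : ν Carleson, Σ_{Q⊆P} (ν_Q/σ(Q))^{1/(1-r)} σ(Q) ≤ σ(P) }`,
with constants depending only on `r`. -/
theorem a1_equiv_a3_duality (r : ℝ) (hr0 : 0 < r) (hr1 : r < 1) :
    ∃ C : ℝ≥0∞, 0 < C ∧ C ≠ ⊤ ∧
      ∀ (n : ℕ) (σ : Measure (Fin n → ℝ)) [IsLocallyFiniteMeasure σ]
        (lam : DyadicCube n → ℝ≥0∞),
        (Function.support lam).Finite → (∀ Q, lam Q ≠ ⊤) →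
        (∀ Q : DyadicCube n, σ Q.toSet = 0 → lam Q = 0) →
        C⁻¹ * (⨆ ν : {ν : DyadicCube n → ℝ≥0∞ //
                (∀ Q : DyadicCube n, σ Q.toSet = 0 → ν Q = 0) ∧
                ∀ P : DyadicCube n, σ P.toSet ≠ 0 →
                  (∑' Q : {Q : DyadicCube n // Q.toSet ⊆ P.toSet},
                      (ν Q.1 / σ Q.1.toSet) ^ (1 / (1 - r)) * σ Q.1.toSet)
                    ≤ σ P.toSet},
              ∑' R : DyadicCube n, (lam R) ^ r * ν.1 R)
            ≤ ∫⁻ x, (dSum lam x) ^ r ∂σ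
        ∧ (∫⁻ x, (dSum lam x) ^ r ∂σ)
            ≤ C * ⨆ ν : {ν : DyadicCube n → ℝ≥0∞ //
                (∀ Q : DyadicCube n, σ Q.toSet = 0 → ν Q = 0) ∧
                ∀ P : DyadicCube n, σ P.toSet ≠ 0 →
                  (∑' Q : {Q : DyadicCube n // Q.toSet ⊆ P.toSet},
                      (ν Q.1 / σ Q.1.toSet) ^ (1 / (1 - r)) * σ Q.1.toSet)
                    ≤ σ P.toSet},
              ∑' R : DyadicCube n, (lam R) ^ r * ν.1 R := by
  classical
  have hr0' : ENNReal.ofReal r ≠ 0 := (ENNReal.ofReal_pos.mpr hr0).ne'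
  have hinvne : (ENNReal.ofReal r)⁻¹ ≠ ⊤ := ENNReal.inv_ne_top.mpr hr0'
  have hinv0 : (ENNReal.ofReal r)⁻¹ ≠ 0 := ENNReal.inv_ne_zero.mpr ENNReal.ofReal_ne_top
  refine ⟨2 * (ENNReal.ofReal r)⁻¹, ?_, ?_, ?_⟩
  · exact pos_iff_ne_zero.mpr (mul_ne_zero (by norm_num) hinv0)
  · exact ENNReal.mul_ne_top (by norm_num) hinvne
  · intro n σ _ lam hsupp hlamne hnull
    have hC0 : (2 * (ENNReal.ofReal r)⁻¹ : ℝ≥0∞) ≠ 0 := mul_ne_zero (by norm_num) hinv0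
    have hCtop : (2 * (ENNReal.ofReal r)⁻¹ : ℝ≥0∞) ≠ ⊤ := ENNReal.mul_ne_top (by norm_num) hinvne
    have hC1 : (1:ℝ≥0∞) ≤ 2 * (ENNReal.ofReal r)⁻¹ := by
      have h1 : (ENNReal.ofReal r) ≤ 1 := ENNReal.ofReal_le_one.mpr hr1.le
      have h2 : (1:ℝ≥0∞) ≤ (ENNReal.ofReal r)⁻¹ :=
        ENNReal.one_le_inv.mpr h1
      calc (1:ℝ≥0∞) = 1 * 1 := (one_mul 1).symm
        _ ≤ 2 * (ENNReal.ofReal r)⁻¹ := mul_le_mul' one_le_two h2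
    constructor
    · have hsup : (⨆ ν : {ν : DyadicCube n → ℝ≥0∞ //
          (∀ Q : DyadicCube n, σ Q.toSet = 0 → ν Q = 0) ∧
          ∀ P : DyadicCube n, σ P.toSet ≠ 0 →
            (∑' Q : {Q : DyadicCube n // Q.toSet ⊆ P.toSet},
                (ν Q.1 / σ Q.1.toSet) ^ (1 / (1 - r)) * σ Q.1.toSet)
              ≤ σ P.toSet},
          ∑' R : DyadicCube n, (lam R) ^ r * ν.1 R)
          ≤ (2 * (ENNReal.ofReal r)⁻¹) * ∫⁻ x, (dSum lam x) ^ r ∂σ :=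
        iSup_le fun ν => A1A3.easy_dir hr0 hr1 σ hsupp hlamne ν.1 ν.2.1 ν.2.2
      calc (2 * (ENNReal.ofReal r)⁻¹)⁻¹ * _ ≤ (2 * (ENNReal.ofReal r)⁻¹)⁻¹
            * ((2 * (ENNReal.ofReal r)⁻¹) * ∫⁻ x, (dSum lam x) ^ r ∂σ) :=
          mul_le_mul_right hsup _
        _ = ∫⁻ x, (dSum lam x) ^ r ∂σ := by
          rw [← mul_assoc, ENNReal.inv_mul_cancel hC0 hCtop, one_mul]
    · have hle : ∫⁻ x, (dSum lam x) ^ r ∂σ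
          ≤ ⨆ ν : {ν : DyadicCube n → ℝ≥0∞ //
            (∀ Q : DyadicCube n, σ Q.toSet = 0 → ν Q = 0) ∧
            ∀ P : DyadicCube n, σ P.toSet ≠ 0 →
              (∑' Q : {Q : DyadicCube n // Q.toSet ⊆ P.toSet},
                  (ν Q.1 / σ Q.1.toSet) ^ (1 / (1 - r)) * σ Q.1.toSet)
                ≤ σ P.toSet},
            ∑' R : DyadicCube n, (lam R) ^ r * ν.1 R := by
        refine le_trans (A1A3.a1_le_W hr0 hsupp σ) ?_
        refine le_trans (A1A3.nustar_pairing hr0 hr1 σ hsupp hlamne) ?_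
        exact le_iSup (fun ν : {ν : DyadicCube n → ℝ≥0∞ //
            (∀ Q : DyadicCube n, σ Q.toSet = 0 → ν Q = 0) ∧
            ∀ P : DyadicCube n, σ P.toSet ≠ 0 →
              (∑' Q : {Q : DyadicCube n // Q.toSet ⊆ P.toSet},
                  (ν Q.1 / σ Q.1.toSet) ^ (1 / (1 - r)) * σ Q.1.toSet)
                ≤ σ P.toSet} => ∑' R : DyadicCube n, (lam R) ^ r * ν.1 R)
          ⟨A1A3.nustar σ r lam, A1A3.nustar_null hr1 σ hnull,
            fun P _ => A1A3.nustar_carleson hr0 hr1 σ hsupp hlamne P⟩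
      exact hle.trans (le_mul_of_one_le_left (zero_le) hC1)
end
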